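/- arXiv:1409.2327 — 6 statements merged into one kernel-verified Lean document; each statement's English description precedes it below -/
import Mathlib

section
/- Let L > 0 and 0 < α < 1. For every continuous function ψ : [0,L] → ℂ with finite α-Hölder seminorm, one has ‖ψ‖_∞ ≤ ‖ψ‖_2 / √L + 2 ‖ψ‖_2^{2α/(2α+1)} ‖ψ‖_{Hol,α}^{1/(2α+1)}. -/
open Real Set

/-- Let `L > 0` and `0 < α < 1`. For every continuous function
`ψ : [0,L] → ℂ` with α-Hölder seminorm at most `C`, one has
`‖ψ‖_∞ ≤ ‖ψ‖₂ / √L + 2 ‖ψ‖₂ ^ (2α/(2α+1)) * C ^ (1/(2α+1))`. -/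
theorem supnorm_le_L2_holder_interpolation
    (L α : ℝ) (hL : 0 < L) (hα0 : 0 < α) (hα1 : α < 1)
    (ψ : ℝ → ℂ) (hψ : ContinuousOn ψ (Set.Icc 0 L))
    (C : ℝ) (hC : 0 ≤ C)
    (hHol : ∀ x ∈ Set.Icc 0 L, ∀ y ∈ Set.Icc 0 L, ‖ψ y - ψ x‖ ≤ C * |y - x| ^ α) :
    ∀ x ∈ Set.Icc 0 L,
      ‖ψ x‖ ≤ Real.sqrt (∫ t in (0:ℝ)..L, ‖ψ t‖ ^ 2) / Real.sqrt L
        + 2 * (Real.sqrt (∫ t in (0:ℝ)..L, ‖ψ t‖ ^ 2)) ^ (2 * α / (2 * α + 1))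
            * C ^ (1 / (2 * α + 1)) := by
  intro x hx
  have hx0 : (0:ℝ) ≤ x := hx.1
  have hxL : x ≤ L := hx.2
  set M : ℝ := Real.sqrt (∫ t in (0:ℝ)..L, ‖ψ t‖ ^ 2) with hMdef
  have hfc : ContinuousOn (fun t => ‖ψ t‖) (Set.Icc 0 L) := hψ.norm
  have hf2c : ContinuousOn (fun t => ‖ψ t‖ ^ 2) (Set.Icc 0 L) := hfc.pow 2
  have hint_nonneg : 0 ≤ ∫ t in (0:ℝ)..L, ‖ψ t‖ ^ 2 :=
    intervalIntegral.integral_nonneg hL.le (fun t _ => by positivity)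
  have hM0 : 0 ≤ M := Real.sqrt_nonneg _
  have hM2 : M ^ 2 = ∫ t in (0:ℝ)..L, ‖ψ t‖ ^ 2 := Real.sq_sqrt hint_nonneg
  have hβ : (0:ℝ) < 2 * α + 1 := by linarith
  -- Key lemma: for every admissible window size δ, ‖ψ x‖ ≤ M/√δ + C δ^α.
  have key : ∀ δ : ℝ, 0 < δ → δ ≤ L → ‖ψ x‖ ≤ M / Real.sqrt δ + C * δ ^ α := by
    intro δ hδ0 hδL
    set a0 : ℝ := min x (L - δ) with ha0def
    have ha00 : 0 ≤ a0 := le_min hx0 (by linarith)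
    have ha0x : a0 ≤ x := min_le_left _ _
    have ha0L : a0 + δ ≤ L := by
      have := min_le_right x (L - δ); linarith
    have hxa0 : x ≤ a0 + δ := by
      rcases min_cases x (L - δ) with ⟨h1, _⟩ | ⟨h1, _⟩ <;> rw [ha0def, h1] <;> linarith
    have hab : a0 ≤ a0 + δ := by linarith
    have hsub : Set.Icc a0 (a0 + δ) ⊆ Set.Icc 0 L := by
      intro t ht; exact ⟨le_trans ha00 ht.1, le_trans ht.2 ha0L⟩
    have hfi : IntervalIntegrable (fun t => ‖ψ t‖) MeasureTheory.volume a0 (a0 + δ) :=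
      (hfc.mono hsub).intervalIntegrable_of_Icc hab
    have hf2i : IntervalIntegrable (fun t => ‖ψ t‖ ^ 2) MeasureTheory.volume a0 (a0 + δ) :=
      (hf2c.mono hsub).intervalIntegrable_of_Icc hab
    have hf2iL : IntervalIntegrable (fun t => ‖ψ t‖ ^ 2) MeasureTheory.volume 0 L :=
      hf2c.intervalIntegrable_of_Icc hL.le
    -- pointwise Hölder bound on the window
    have hpt : ∀ t ∈ Set.Icc a0 (a0 + δ), ‖ψ x‖ ≤ ‖ψ t‖ + C * δ ^ α := by
      intro t ht
      have h1 := hHol t (hsub ht) x hx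
      have h2 : |x - t| ≤ δ := by
        rw [abs_le]; constructor
        · linarith [ht.2]
        · linarith [ht.1]
      have h3 : |x - t| ^ α ≤ δ ^ α := Real.rpow_le_rpow (abs_nonneg _) h2 hα0.le
      have h4 : ‖ψ x‖ ≤ ‖ψ t‖ + ‖ψ x - ψ t‖ := by
        have := norm_add_le (ψ t) (ψ x - ψ t)
        simpa using this
      have h5 : C * |x - t| ^ α ≤ C * δ ^ α := by
        exact mul_le_mul_of_nonneg_left h3 hC
      linarith
    -- integrate the pointwise bound
    have hstep2 : δ * ‖ψ x‖ ≤ (∫ t in a0..(a0 + δ), ‖ψ t‖) + δ * (C * δ ^ α) := by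
      have hmono := intervalIntegral.integral_mono_on hab
        (intervalIntegrable_const (c := ‖ψ x‖))
        (hfi.add (intervalIntegrable_const (c := C * δ ^ α))) hpt
      rw [intervalIntegral.integral_const,
        intervalIntegral.integral_add hfi (intervalIntegrable_const (c := C * δ ^ α)),
        intervalIntegral.integral_const] at hmono
      simp only [smul_eq_mul, add_sub_cancel_left] at hmono
      linarith
    have hIf2 : (∫ t in a0..(a0 + δ), ‖ψ t‖ ^ 2) ≤ M ^ 2 := by
      rw [hM2]
      refine intervalIntegral.integral_mono_interval ha00 hab ha0L ?_ hf2iL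
      exact Filter.Eventually.of_forall fun t => by positivity
    -- conclude with an ε of room
    refine le_of_forall_pos_le_add fun ε hε => ?_
    set aa : ℝ := M / Real.sqrt δ with haadef
    have haa0 : 0 ≤ aa := div_nonneg hM0 (Real.sqrt_nonneg _)
    set s : ℝ := aa + ε with hsdef
    have hs0 : 0 < s := by positivity
    have hpt2 : ∀ r : ℝ, r ≤ r ^ 2 / (2 * s) + s / 2 := by
      intro r
      rw [← sub_nonneg]
      have heq : r ^ 2 / (2 * s) + s / 2 - r = (r - s) ^ 2 / (2 * s) := by
        field_simp; ring
      rw [heq]; positivity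
    have hCS : (∫ t in a0..(a0 + δ), ‖ψ t‖)
        ≤ (∫ t in a0..(a0 + δ), ‖ψ t‖ ^ 2) / (2 * s) + δ * (s / 2) := by
      have hmono := intervalIntegral.integral_mono_on hab hfi
        ((hf2i.div_const (2 * s)).add (intervalIntegrable_const (c := s / 2)))
        (fun t _ => hpt2 ‖ψ t‖)
      rw [intervalIntegral.integral_add (hf2i.div_const (2 * s))
        (intervalIntegrable_const (c := s / 2)),
        intervalIntegral.integral_div, intervalIntegral.integral_const] at hmono
      simp only [smul_eq_mul, add_sub_cancel_left] at hmono
      linarith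
    have haa2 : aa ^ 2 * δ = M ^ 2 := by
      rw [haadef, div_pow, Real.sq_sqrt hδ0.le]
      field_simp
    have hdd : aa ^ 2 * δ / (2 * s) ≤ aa * δ / 2 := by
      rw [div_le_div_iff₀ (by positivity) (by positivity), hsdef]
      nlinarith [mul_nonneg (mul_nonneg haa0 hδ0.le) hε.le]
    have htotal : δ * ‖ψ x‖ ≤ δ * (aa + C * δ ^ α + ε) := by
      have h1 : (∫ t in a0..(a0 + δ), ‖ψ t‖ ^ 2) / (2 * s) ≤ M ^ 2 / (2 * s) :=
        div_le_div_of_nonneg_right ?_ (by positivity) |>.trans_eq rfl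
      · have h2 : M ^ 2 / (2 * s) ≤ aa * δ / 2 := by rw [← haa2]; exact hdd
        nlinarith [hstep2, hCS]
      · exact hIf2
    have := (mul_le_mul_iff_right₀ hδ0).mp htotal
    linarith
  -- Split into cases and choose the optimal δ.
  rcases eq_or_lt_of_le hC with hC0 | hCpos
  · -- C = 0
    have h := key L hL le_rfl
    have hp0 : (1 / (2 * α + 1) : ℝ) ≠ 0 := by positivity
    rw [← hC0] at h ⊢
    rw [Real.zero_rpow hp0]
    simpa using h
  rcases eq_or_lt_of_le hM0 with hMz | hMpos
  · -- M = 0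
    have hψx0 : ‖ψ x‖ ≤ 0 := by
      refine le_of_forall_pos_le_add fun ε hε => ?_
      set δ : ℝ := min L ((ε / C) ^ (1 / α)) with hδdef
      have hδ0 : 0 < δ := lt_min hL (Real.rpow_pos_of_pos (by positivity) _)
      have h := key δ hδ0 (min_le_left _ _)
      have h1 : δ ^ α ≤ ((ε / C) ^ (1 / α)) ^ α :=
        Real.rpow_le_rpow hδ0.le (min_le_right _ _) hα0.le
      have h2 : ((ε / C) ^ (1 / α) : ℝ) ^ α = ε / C := by
        rw [← Real.rpow_mul (by positivity), one_div_mul_cancel hα0.ne', Real.rpow_one]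
      have h3 : C * δ ^ α ≤ ε := by
        calc C * δ ^ α ≤ C * (ε / C) := by
              rw [← h2]; exact mul_le_mul_of_nonneg_left h1 hC
          _ = ε := by field_simp
      rw [← hMz, zero_div] at h
      linarith
    have hq0 : (2 * α / (2 * α + 1) : ℝ) ≠ 0 := by positivity
    rw [← hMz, Real.zero_rpow hq0, zero_div]
    simpa using hψx0
  -- M > 0, C > 0
  set p : ℝ := 1 / (2 * α + 1) with hpdef
  set q : ℝ := 2 * α / (2 * α + 1) with hqdef
  set δs : ℝ := (M / C) ^ (2 / (2 * α + 1)) with hδsdef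
  have hMC0 : 0 < M / C := by positivity
  have hδs0 : 0 < δs := Real.rpow_pos_of_pos hMC0 _
  have hqp : q + p = 1 := by rw [hpdef, hqdef]; field_simp
  have hCq : (0:ℝ) < C ^ q := Real.rpow_pos_of_pos hCpos q
  have hMp : (0:ℝ) < M ^ p := Real.rpow_pos_of_pos hMpos p
  have hkey3 : C * δs ^ α = M ^ q * C ^ p := by
    have e1 : δs ^ α = M ^ q / C ^ q := by
      rw [hδsdef, ← Real.rpow_mul hMC0.le,
        show (2 / (2 * α + 1)) * α = q by rw [hqdef]; ring, Real.div_rpow hM0 hC]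
    rw [e1, show p = 1 - q by linarith, Real.rpow_sub hCpos, Real.rpow_one]
    field_simp
  have hkey2 : M / Real.sqrt δs = M ^ q * C ^ p := by
    have e2 : Real.sqrt δs = M ^ p / C ^ p := by
      rw [Real.sqrt_eq_rpow, hδsdef, ← Real.rpow_mul hMC0.le,
        show (2 / (2 * α + 1)) * (1 / 2) = p by rw [hpdef]; ring, Real.div_rpow hM0 hC]
    rw [e2, show q = 1 - p by linarith, Real.rpow_sub hMpos, Real.rpow_one]
    field_simp
  have hMqCp : 0 ≤ M ^ q * C ^ p := by positivity
  rcases le_or_gt δs L with hle | hgt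
  · have h := key δs hδs0 hle
    have hfirst : 0 ≤ M / Real.sqrt L := by positivity
    rw [hkey2, hkey3] at h
    linarith
  · have h := key L hL le_rfl
    have h1 : L ^ α ≤ δs ^ α := Real.rpow_le_rpow hL.le hgt.le hα0.le
    have hCL : C * L ^ α ≤ M ^ q * C ^ p := by
      calc C * L ^ α ≤ C * δs ^ α := mul_le_mul_of_nonneg_left h1 hC
        _ = M ^ q * C ^ p := hkey3
    linarith
end

section
/- Let L > 0, 0 < α < 1 and p > 2. For every continuous function φ : [0,L] → ℂ with finite α-Hölder seminorm, one has ‖φ‖_p^p ≤ (2/√L)^{p−2} ‖φ‖_2^p + 4^{p−2} ‖φ‖_2^{2(αp+1)/(2α+1)} ‖φ‖_{Hol,α}^{(p−2)/(2α+1)}, where ‖φ‖_p^p = ∫_0^L |φ(x)|^p dx. -/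
open Real Set

/-- For `L > 0`, `0 < α < 1`, `p > 2` and `φ` continuous on `[0,L]` with
α-Hölder seminorm at most `C`:
`‖φ‖_p^p ≤ (2/√L)^(p-2) ‖φ‖₂^p + 4^(p-2) ‖φ‖₂^(2(αp+1)/(2α+1)) C^((p-2)/(2α+1))`. -/
theorem Lp_le_L2_holder_interpolation
    (L α p : ℝ) (hL : 0 < L) (hα0 : 0 < α) (hα1 : α < 1) (hp : 2 < p)
    (φ : ℝ → ℂ) (hφ : ContinuousOn φ (Set.Icc 0 L))
    (C : ℝ) (hC : 0 ≤ C)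
    (hHol : ∀ x ∈ Set.Icc 0 L, ∀ y ∈ Set.Icc 0 L, ‖φ y - φ x‖ ≤ C * |y - x| ^ α) :
    (∫ t in (0:ℝ)..L, ‖φ t‖ ^ p)
      ≤ (2 / Real.sqrt L) ^ (p - 2) * (Real.sqrt (∫ t in (0:ℝ)..L, ‖φ t‖ ^ 2)) ^ p
        + 4 ^ (p - 2)
            * (Real.sqrt (∫ t in (0:ℝ)..L, ‖φ t‖ ^ 2)) ^ (2 * (α * p + 1) / (2 * α + 1))
            * C ^ ((p - 2) / (2 * α + 1)) := by
  set f : ℝ → ℝ := fun t => ‖φ t‖ with hfdef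
  have hfc : ContinuousOn f (Icc 0 L) := hφ.norm
  have hf0 : ∀ x, 0 ≤ f x := fun x => norm_nonneg _
  obtain ⟨x₀, hx₀, hmax⟩ :=
    isCompact_Icc.exists_isMaxOn (nonempty_Icc.2 hL.le) hfc
  set M := f x₀ with hMdef
  have hM0 : 0 ≤ M := hf0 _
  have hMf : ∀ y ∈ Icc 0 L, f y ≤ M := hmax
  set A := ∫ t in (0:ℝ)..L, f t ^ 2 with hAdef
  have hA0 : 0 ≤ A :=
    intervalIntegral.integral_nonneg hL.le (fun x _ => sq_nonneg _)
  set S := Real.sqrt A with hSdef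
  have hS0 : 0 ≤ S := Real.sqrt_nonneg _
  have hS2 : S ^ 2 = A := Real.sq_sqrt hA0
  set β := 2 * α + 1 with hβdef
  have hβ0 : 0 < β := by positivity
  -- integrability of f^2 on subintervals
  have hint2 : ∀ a b : ℝ, a ≤ b → Icc a b ⊆ Icc 0 L →
      IntervalIntegrable (fun t => f t ^ 2) MeasureTheory.volume a b := by
    intro a b hab hsub
    apply ContinuousOn.intervalIntegrable
    have : uIcc a b = Icc a b := uIcc_of_le hab
    rw [this]
    exact ((hfc.mono hsub).pow 2)
  -- Key pointwise-supremum bound via the Hölder seminorm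
  have key : ∀ δ : ℝ, 0 < δ → δ ≤ L → M ≤ S / Real.sqrt δ + C * δ ^ α := by
    intro δ hδ0 hδL
    have hSd : 0 ≤ S / Real.sqrt δ := div_nonneg hS0 (Real.sqrt_nonneg _)
    have hE0 : 0 ≤ C * δ ^ α := by positivity
    by_cases hME : M ≤ C * δ ^ α
    · linarith
    push_neg at hME
    set a := min x₀ (L - δ) with hadef
    have ha0 : 0 ≤ a := le_min hx₀.1 (by linarith)
    have hab : a + δ ≤ L := by
      rcases min_le_iff.1 (le_refl a) with h | h
      · rcases le_total x₀ (L - δ) with h1 | h1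
        · have : a = x₀ := min_eq_left h1
          linarith [this ▸ h1]
        · have : a = L - δ := min_eq_right h1
          linarith [this.le]
      · linarith [min_le_right x₀ (L - δ)]
    have hxab : x₀ ∈ Icc a (a + δ) := by
      constructor
      · exact min_le_left _ _
      · rcases le_total x₀ (L - δ) with h1 | h1
        · have : a = x₀ := min_eq_left h1
          rw [this]; linarith
        · have : a = L - δ := min_eq_right h1
          rw [this]; linarith [hx₀.2]
    have hsub : Icc a (a + δ) ⊆ Icc 0 L := Icc_subset_Icc ha0 hab
    -- lower bound for f on the interval
    have hlow : ∀ y ∈ Icc a (a + δ), M - C * δ ^ α ≤ f y := by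
      intro y hy
      have hyL : y ∈ Icc 0 L := hsub hy
      have h1 : ‖φ x₀ - φ y‖ ≤ C * |x₀ - y| ^ α := hHol y hyL x₀ hx₀
      have h2 : f x₀ - f y ≤ ‖φ x₀ - φ y‖ := by
        simpa [hfdef] using norm_sub_norm_le (φ x₀) (φ y)
      have h3 : |x₀ - y| ≤ δ := by
        rw [abs_le]
        constructor <;> [linarith [hxab.1, hy.2]; linarith [hxab.2, hy.1]]
      have h4 : |x₀ - y| ^ α ≤ δ ^ α :=
        Real.rpow_le_rpow (abs_nonneg _) h3 hα0.le
      have h5 : C * |x₀ - y| ^ α ≤ C * δ ^ α := by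
        exact mul_le_mul_of_nonneg_left h4 hC
      linarith
    -- integrate the square of the lower bound
    have hconst : (∫ _t in a..(a + δ), (M - C * δ ^ α) ^ 2)
        = δ * (M - C * δ ^ α) ^ 2 := by
      rw [intervalIntegral.integral_const, smul_eq_mul, add_sub_cancel_left]
    have hmono1 : (∫ t in a..(a + δ), (M - C * δ ^ α) ^ 2)
        ≤ ∫ t in a..(a + δ), f t ^ 2 := by
      apply intervalIntegral.integral_mono_on (by linarith)
        intervalIntegrable_const (hint2 a (a + δ) (by linarith) hsub)
      intro y hy
      have := hlow y hy
      have h0 : 0 ≤ M - C * δ ^ α := by linarith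
      exact pow_le_pow_left₀ h0 this 2
    have hmono2 : (∫ t in a..(a + δ), f t ^ 2) ≤ A := by
      apply intervalIntegral.integral_mono_interval ha0 (by linarith : a ≤ a + δ) hab
      · filter_upwards with x using sq_nonneg _
      · exact hint2 0 L hL.le (by simp)
    have hsq : δ * (M - C * δ ^ α) ^ 2 ≤ A := by
      rw [← hconst]; exact hmono1.trans hmono2
    -- conclude
    have hδs : 0 < Real.sqrt δ := Real.sqrt_pos.2 hδ0
    have h6 : (M - C * δ ^ α) ^ 2 ≤ A / δ := by
      rw [le_div_iff₀ hδ0]; linarith [hsq]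
    have h7 : M - C * δ ^ α ≤ S / Real.sqrt δ := by
      have h8 := Real.sqrt_le_sqrt h6
      rw [Real.sqrt_sq (by linarith : 0 ≤ M - C * δ ^ α),
        Real.sqrt_div hA0] at h8
      exact h8
    linarith

  -- Optimal choice of δ: the sup bound
  set X := S ^ (2 * α / β) * C ^ (1 / β) with hXdef
  have hX0 : 0 ≤ X := by positivity
  have hsL : 0 < Real.sqrt L := Real.sqrt_pos.2 hL
  have hq2 : (0:ℝ) ≤ p - 2 := by linarith
  have hMbound : M ≤ S / Real.sqrt L + 2 * X := by
    rcases hC.eq_or_lt with hC0 | hCpos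
    · have h := key L hL le_rfl
      have hz : C * L ^ α = 0 := by rw [← hC0]; ring
      rw [hz] at h
      linarith
    rcases hS0.eq_or_lt with hS0' | hSpos
    · -- S = 0 : show M ≤ 0
      have hM_le : M ≤ 0 := by
        by_contra hMpos
        push_neg at hMpos
        set δ := min L ((M / (2 * C)) ^ (1 / α)) with hδdef
        have hqpos : 0 < (M / (2 * C)) ^ (1 / α) :=
          Real.rpow_pos_of_pos (by positivity) _
        have hδ0 : 0 < δ := lt_min hL hqpos
        have h := key δ hδ0 (min_le_left _ _)
        have hda : δ ^ α ≤ M / (2 * C) := by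
          calc δ ^ α ≤ ((M / (2 * C)) ^ (1 / α)) ^ α :=
              Real.rpow_le_rpow hδ0.le (min_le_right _ _) hα0.le
            _ = M / (2 * C) := by
              rw [← Real.rpow_mul (by positivity), one_div,
                inv_mul_cancel₀ hα0.ne', Real.rpow_one]
        have hCd : C * δ ^ α ≤ M / 2 := by
          calc C * δ ^ α ≤ C * (M / (2 * C)) := mul_le_mul_of_nonneg_left hda hC
            _ = M / 2 := by field_simp
        rw [← hS0', zero_div] at h
        linarith
      have h0 : 0 ≤ S / Real.sqrt L + 2 * X := by positivity
      linarith
    · -- C > 0, S > 0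
      set δ₀ := (S / C) ^ (2 / β) with hδ₀def
      have hSC : 0 < S / C := div_pos hSpos hCpos
      have hδ₀pos : 0 < δ₀ := Real.rpow_pos_of_pos hSC _
      have hSb : 0 < S ^ (1 / β) := Real.rpow_pos_of_pos hSpos _
      have hCb : 0 < C ^ (1 / β) := Real.rpow_pos_of_pos hCpos _
      have hCb2 : 0 < C ^ (2 * α / β) := Real.rpow_pos_of_pos hCpos _
      have hsqrtδ₀ : Real.sqrt δ₀ = (S / C) ^ (1 / β) := by
        rw [Real.sqrt_eq_rpow, hδ₀def, ← Real.rpow_mul hSC.le]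
        congr 1
        field_simp
      have e1 : 2 * α / β = 1 - 1 / β := by
        field_simp
        ring
      have hval1 : S / Real.sqrt δ₀ = X := by
        rw [hsqrtδ₀, Real.div_rpow hS0 hCpos.le, hXdef, e1,
          Real.rpow_sub hSpos, Real.rpow_one]
        field_simp
      have e2 : 1 / β = 1 - 2 * α / β := by
        field_simp
        rw [hβdef]
        ring
      have hval2 : C * δ₀ ^ α = X := by
        have hmulexp : δ₀ ^ α = (S / C) ^ (2 * α / β) := by
          rw [hδ₀def, ← Real.rpow_mul hSC.le]
          congr 1
          ring
        rw [hmulexp, Real.div_rpow hS0 hCpos.le, hXdef, e2,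
          Real.rpow_sub hCpos, Real.rpow_one]
        field_simp
      by_cases hcase : δ₀ ≤ L
      · have h := key δ₀ hδ₀pos hcase
        rw [hval1, hval2] at h
        have h0 : 0 ≤ S / Real.sqrt L := by positivity
        linarith
      · push_neg at hcase
        have h := key L hL le_rfl
        have h2 : C * L ^ α ≤ X := by
          rw [← hval2]
          exact mul_le_mul_of_nonneg_left
            (Real.rpow_le_rpow hL.le hcase.le hα0.le) hC
        linarith
  -- The main integral bound by the sup
  have hintp : (∫ t in (0:ℝ)..L, f t ^ p) ≤ M ^ (p - 2) * A := by
    have hintP : IntervalIntegrable (fun t => f t ^ p) MeasureTheory.volume 0 L := by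
      apply ContinuousOn.intervalIntegrable
      rw [uIcc_of_le hL.le]
      exact hfc.rpow_const (fun x _ => Or.inr (by linarith))
    have hintC : IntervalIntegrable (fun t => M ^ (p - 2) * f t ^ 2)
        MeasureTheory.volume 0 L := (hint2 0 L hL.le (by simp)).const_mul _
    have hmono : (∫ t in (0:ℝ)..L, f t ^ p)
        ≤ ∫ t in (0:ℝ)..L, M ^ (p - 2) * f t ^ 2 := by
      apply intervalIntegral.integral_mono_on hL.le hintP hintC
      intro y hy
      rcases (hf0 y).eq_or_lt with h0 | h0
      · rw [← h0, Real.zero_rpow (by positivity : p ≠ 0)]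
        positivity
      · have e : f y ^ p = f y ^ (p - 2) * f y ^ 2 := by
          have h2' : f y ^ (2:ℝ) = f y ^ (2:ℕ) := by
            rw [← Real.rpow_natCast (f y) 2]
            norm_num
          rw [← h2', ← Real.rpow_add h0]
          congr 1
          ring
        rw [e]
        exact mul_le_mul_of_nonneg_right
          (Real.rpow_le_rpow (hf0 y) (hMf y hy) hq2)
          (by positivity)
    rwa [intervalIntegral.integral_const_mul] at hmono
  -- The elementary (a+b)^q ≤ 2^q (a^q + b^q)
  set B1 := S / Real.sqrt L with hB1def
  set B2 := 2 * X with hB2def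
  have hB1 : 0 ≤ B1 := by positivity
  have hB2 : 0 ≤ B2 := by positivity
  have hMp : M ^ (p - 2) ≤ 2 ^ (p - 2) * (B1 ^ (p - 2) + B2 ^ (p - 2)) := by
    have h1 : M ^ (p - 2) ≤ (B1 + B2) ^ (p - 2) :=
      Real.rpow_le_rpow hM0 hMbound hq2
    have h2 : B1 + B2 ≤ 2 * max B1 B2 := by
      rcases le_total B1 B2 with h | h
      · rw [max_eq_right h]; linarith
      · rw [max_eq_left h]; linarith
    have h3 : (B1 + B2) ^ (p - 2) ≤ (2 * max B1 B2) ^ (p - 2) :=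
      Real.rpow_le_rpow (by positivity) h2 hq2
    have h4 : ((2:ℝ) * max B1 B2) ^ (p - 2) = 2 ^ (p - 2) * (max B1 B2) ^ (p - 2) :=
      Real.mul_rpow (by norm_num) (le_max_of_le_left hB1)
    have h5 : (max B1 B2) ^ (p - 2) ≤ B1 ^ (p - 2) + B2 ^ (p - 2) := by
      rcases le_total B1 B2 with h | h
      · rw [max_eq_right h]
        have : 0 ≤ B1 ^ (p - 2) := by positivity
        linarith
      · rw [max_eq_left h]
        have : 0 ≤ B2 ^ (p - 2) := by positivity
        linarith
    calc M ^ (p - 2) ≤ (B1 + B2) ^ (p - 2) := h1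
      _ ≤ (2 * max B1 B2) ^ (p - 2) := h3
      _ = 2 ^ (p - 2) * (max B1 B2) ^ (p - 2) := h4
      _ ≤ 2 ^ (p - 2) * (B1 ^ (p - 2) + B2 ^ (p - 2)) :=
          mul_le_mul_of_nonneg_left h5 (by positivity)
  -- Rewrite the two terms in closed form
  have hA_eq : A = S ^ (2:ℝ) := by
    rw [← hS2, ← Real.rpow_natCast S 2]
    norm_num
  have hterm1 : 2 ^ (p - 2) * B1 ^ (p - 2) * A
      = (2 / Real.sqrt L) ^ (p - 2) * S ^ p := by
    have hSp : S ^ (p - 2) * S ^ (2:ℝ) = S ^ p := by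
      rw [← Real.rpow_add' hS0 (by rw [sub_add_cancel]; positivity)]
      congr 1
      ring
    rw [hA_eq, hB1def, Real.div_rpow hS0 hsL.le,
      Real.div_rpow (by norm_num : (0:ℝ) ≤ 2) hsL.le, ← hSp]
    field_simp
  have hterm2 : 2 ^ (p - 2) * B2 ^ (p - 2) * A
      = 4 ^ (p - 2) * S ^ (2 * (α * p + 1) / β) * C ^ ((p - 2) / β) := by
    have hX1 : B2 ^ (p - 2) = 2 ^ (p - 2) * X ^ (p - 2) :=
      Real.mul_rpow (by norm_num) hX0
    have hX2 : X ^ (p - 2)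
        = S ^ (2 * α / β * (p - 2)) * C ^ (1 / β * (p - 2)) := by
      rw [hXdef, Real.mul_rpow (by positivity) (by positivity),
        ← Real.rpow_mul hS0, ← Real.rpow_mul hC]
    have hsum : 2 * α / β * (p - 2) + 2 = 2 * (α * p + 1) / β := by
      field_simp
      ring
    have hSsum : S ^ (2 * α / β * (p - 2)) * S ^ (2:ℝ)
        = S ^ (2 * (α * p + 1) / β) := by
      rw [← Real.rpow_add' hS0 (by
        rw [hsum]
        positivity)]
      rw [hsum]
    have h44 : (2:ℝ) ^ (p - 2) * 2 ^ (p - 2) = 4 ^ (p - 2) := by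
      rw [← Real.mul_rpow (by norm_num) (by norm_num)]
      norm_num
    have hCe : 1 / β * (p - 2) = (p - 2) / β := by ring
    rw [hA_eq, hX1, hX2, hCe]
    calc 2 ^ (p - 2) * (2 ^ (p - 2) * (S ^ (2 * α / β * (p - 2)) * C ^ ((p - 2) / β)))
          * S ^ (2:ℝ)
        = (2 ^ (p - 2) * 2 ^ (p - 2))
            * (S ^ (2 * α / β * (p - 2)) * S ^ (2:ℝ)) * C ^ ((p - 2) / β) := by
          ring
      _ = 4 ^ (p - 2) * S ^ (2 * (α * p + 1) / β) * C ^ ((p - 2) / β) := by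
          rw [h44, hSsum]
  -- Assemble
  have hAss : M ^ (p - 2) * A
      ≤ (2 / Real.sqrt L) ^ (p - 2) * S ^ p
        + 4 ^ (p - 2) * S ^ (2 * (α * p + 1) / β) * C ^ ((p - 2) / β) := by
    have h := mul_le_mul_of_nonneg_right hMp hA0
    rw [← hterm1, ← hterm2]
    calc M ^ (p - 2) * A ≤ 2 ^ (p - 2) * (B1 ^ (p - 2) + B2 ^ (p - 2)) * A := h
      _ = 2 ^ (p - 2) * B1 ^ (p - 2) * A + 2 ^ (p - 2) * B2 ^ (p - 2) * A := by
          ring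
  exact hintp.trans hAss
end

section
/- Let L > 0, 2 < p < 6 and 0 < α < 1/2 be such that (p−2)/(2α+1) < 2. Then for every δ > 0 there exist finite constants C₁ and C₂ (depending only on p, α, L and δ) such that for all λ > 0 and every continuous φ : [0,L] → ℂ with finite α-Hölder seminorm: λ ‖φ‖_p^p ≤ C₁ λ ‖φ‖_2^p + C₂ λ^{(4α+2)/(4α+4−p)} ‖φ‖_2^{(4αp+4)/(4α+4−p)} + δ ‖φ‖_{Hol,α}². -/
open Real Set


private lemma rpow_add_le_two_rpow {x y r : ℝ} (hx : 0 ≤ x) (hy : 0 ≤ y) (hr : 0 ≤ r) :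
    (x + y) ^ r ≤ 2 ^ r * (x ^ r + y ^ r) := by
  have hm : x + y ≤ 2 * max x y := by
    rcases le_total x y with h | h
    · rw [max_eq_right h]; linarith
    · rw [max_eq_left h]; linarith
  have hmax0 : 0 ≤ max x y := le_max_of_le_left hx
  calc (x + y) ^ r ≤ (2 * max x y) ^ r :=
        Real.rpow_le_rpow (by positivity) hm hr
    _ = 2 ^ r * (max x y) ^ r := Real.mul_rpow (by norm_num) hmax0
    _ ≤ 2 ^ r * (x ^ r + y ^ r) := by
        gcongr
        rcases max_cases x y with ⟨he, _⟩ | ⟨he, _⟩ <;> rw [he]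
        · exact le_add_of_nonneg_right (Real.rpow_nonneg hy r)
        · exact le_add_of_nonneg_left (Real.rpow_nonneg hx r)

private lemma young_eps {x y s t ε : ℝ} (hx : 0 ≤ x) (hy : 0 ≤ y) (hs : 1 < s) (ht : 1 < t)
    (hst : 1 / s + 1 / t = 1) (hε : 0 < ε) :
    y * x ≤ ε * x ^ s + ε ^ (-(t / s)) * y ^ t := by
  have hs0 : 0 < s := by linarith
  have ht0 : 0 < t := by linarith
  set X : ℝ := ε ^ (1 / s) * x with hX
  set Y : ℝ := ε ^ (-(1 / s)) * y with hY
  have hX0 : 0 ≤ X := by positivity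
  have hY0 : 0 ≤ Y := by positivity
  have hXY : y * x = X * Y := by
    rw [hX, hY]
    have : ε ^ (1 / s) * ε ^ (-(1 / s)) = 1 := by
      rw [← Real.rpow_add hε]; simp
    linear_combination (-(x * y)) * this
  have hgm := Real.geom_mean_le_arith_mean2_weighted (le_of_lt (by positivity : (0:ℝ) < 1/s))
    (le_of_lt (by positivity : (0:ℝ) < 1/t)) (Real.rpow_nonneg hX0 s) (Real.rpow_nonneg hY0 t) hst
  have h1 : (X ^ s) ^ (1/s) = X := by
    rw [← Real.rpow_mul hX0, mul_one_div_cancel hs0.ne', Real.rpow_one]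
  have h2 : (Y ^ t) ^ (1/t) = Y := by
    rw [← Real.rpow_mul hY0, mul_one_div_cancel ht0.ne', Real.rpow_one]
  rw [h1, h2] at hgm
  have hXs : X ^ s = ε * x ^ s := by
    rw [hX, Real.mul_rpow (by positivity) hx, ← Real.rpow_mul hε.le,
      one_div_mul_cancel hs0.ne', Real.rpow_one]
  have hYt : Y ^ t = ε ^ (-(t / s)) * y ^ t := by
    rw [hY, Real.mul_rpow (by positivity) hy, ← Real.rpow_mul hε.le]
    congr 2
    field_simp
  have hle1 : 1 / s * (X ^ s) ≤ X ^ s := by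
    have : 0 ≤ X ^ s := Real.rpow_nonneg hX0 s
    nlinarith [this, (by rw [div_lt_one hs0]  ; linarith : 1/s < 1)]
  have hle2 : 1 / t * (Y ^ t) ≤ Y ^ t := by
    have : 0 ≤ Y ^ t := Real.rpow_nonneg hY0 t
    nlinarith [this, (by rw [div_lt_one ht0]  ; linarith : 1/t < 1)]
  calc y * x = X * Y := hXY
    _ ≤ 1 / s * X ^ s + 1 / t * Y ^ t := hgm
    _ ≤ X ^ s + Y ^ t := by linarith
    _ = ε * x ^ s + ε ^ (-(t / s)) * y ^ t := by rw [hXs, hYt]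


private lemma key_pointwise {L α : ℝ} (hL : 0 < L) (hα0 : 0 < α)
    (φ : ℝ → ℂ) (hφ : ContinuousOn φ (Set.Icc 0 L))
    {Hol : ℝ} (hHol : 0 ≤ Hol)
    (hHolder : ∀ x ∈ Set.Icc 0 L, ∀ y ∈ Set.Icc 0 L, ‖φ y - φ x‖ ≤ Hol * |y - x| ^ α)
    {t : ℝ} (ht : t ∈ Set.Icc 0 L) {ℓ : ℝ} (hℓ0 : 0 < ℓ) (hℓL : ℓ ≤ L) :
    ‖φ t‖ ^ 2 ≤ 2 * (∫ u in (0:ℝ)..L, ‖φ u‖ ^ 2) / ℓ + 2 * Hol ^ 2 * ℓ ^ (2 * α) := by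
  obtain ⟨ht0, htL⟩ := ht
  set Q : ℝ := ∫ u in (0:ℝ)..L, ‖φ u‖ ^ 2 with hQdef
  set a : ℝ := min t (L - ℓ) with ha
  have ha0 : 0 ≤ a := le_min ht0 (by linarith)
  have hab : a + ℓ ≤ L := by
    have : a ≤ L - ℓ := min_le_right _ _
    linarith
  have hat : a ≤ t := min_le_left _ _
  have hta : t ≤ a + ℓ := by
    rcases le_total t (L - ℓ) with h | h
    · rw [ha, min_eq_left h]; linarith
    · rw [ha, min_eq_right h]; linarith
  have hc2 : ContinuousOn (fun u => ‖φ u‖ ^ 2) (Icc 0 L) := (hφ.norm).pow 2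
  have hi2 : ∀ b c : ℝ, 0 ≤ b → b ≤ c → c ≤ L →
      IntervalIntegrable (fun u => ‖φ u‖ ^ 2) MeasureTheory.volume b c := by
    intro b c hb hbc hcL
    apply ContinuousOn.intervalIntegrable
    rw [uIcc_of_le hbc]
    exact hc2.mono (Icc_subset_Icc hb hcL)
  -- pointwise bound in y
  have hpt : ∀ y ∈ Icc a (a + ℓ),
      (fun _ : ℝ => ‖φ t‖ ^ 2) y ≤ (fun y => 2 * ‖φ y‖ ^ 2 + 2 * Hol ^ 2 * ℓ ^ (2 * α)) y := by
    intro y hy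
    simp only
    have hyIcc : y ∈ Icc (0:ℝ) L := ⟨ha0.trans hy.1, hy.2.trans hab⟩
    have h1 : ‖φ t - φ y‖ ≤ Hol * |t - y| ^ α := hHolder y hyIcc t ⟨ht0, htL⟩
    have habs : |t - y| ≤ ℓ := by
      rw [abs_le]
      constructor <;> [skip; skip] <;> · have := hy.1; have := hy.2; linarith
    have h2 : ‖φ t - φ y‖ ≤ Hol * ℓ ^ α :=
      h1.trans (mul_le_mul_of_nonneg_left (Real.rpow_le_rpow (abs_nonneg _) habs hα0.le) hHol)
    have h3 : ‖φ t‖ ≤ ‖φ y‖ + Hol * ℓ ^ α := by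
      have := norm_sub_norm_le (φ t) (φ y)
      linarith
    have hl2 : (ℓ ^ α) ^ 2 = ℓ ^ (2 * α) := by
      rw [mul_comm, Real.rpow_mul hℓ0.le, Real.rpow_two]
    have h4 : ‖φ t‖ ^ 2 ≤ (‖φ y‖ + Hol * ℓ ^ α) ^ 2 :=
      pow_le_pow_left₀ (norm_nonneg _) h3 2
    rw [← hl2]
    nlinarith [sq_nonneg (‖φ y‖ - Hol * ℓ ^ α)]
  have hint2 := hi2 a (a + ℓ) ha0 (by linarith) hab
  have hmono := intervalIntegral.integral_mono_on (by linarith : a ≤ a + ℓ)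
    (intervalIntegrable_const) ((hint2.const_mul 2).add intervalIntegrable_const) hpt
  rw [intervalIntegral.integral_const] at hmono
  rw [intervalIntegral.integral_add (hint2.const_mul 2) intervalIntegrable_const,
    intervalIntegral.integral_const_mul, intervalIntegral.integral_const] at hmono
  have hsub : ∫ y in a..(a + ℓ), ‖φ y‖ ^ 2 ≤ Q := by
    apply intervalIntegral.integral_mono_interval ha0 (by linarith : a ≤ a + ℓ) hab
    · exact Filter.Eventually.of_forall fun y => by positivity
    · exact hi2 0 L le_rfl hL.le le_rfl
  have hexp : ℓ ^ (2 * α) * ℓ = ℓ ^ (2 * α + 1) := by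
    rw [Real.rpow_add hℓ0, Real.rpow_one]
  have hstep : ℓ * ‖φ t‖ ^ 2 ≤ 2 * Q + 2 * Hol ^ 2 * ℓ ^ (2 * α) * ℓ := by
    simp only [add_sub_cancel_left, smul_eq_mul] at hmono
    nlinarith [hmono, hsub]
  have hrhs : 2 * Q / ℓ + 2 * Hol ^ 2 * ℓ ^ (2 * α)
      = (2 * Q + 2 * Hol ^ 2 * ℓ ^ (2 * α) * ℓ) / ℓ := by
    field_simp
  rw [hrhs, le_div_iff₀ hℓ0]
  nlinarith [hstep]



private lemma sup_bound {L α : ℝ} (hL : 0 < L) (hα0 : 0 < α)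
    (φ : ℝ → ℂ) (hφ : ContinuousOn φ (Set.Icc 0 L))
    {Hol : ℝ} (hHol : 0 ≤ Hol)
    (hHolder : ∀ x ∈ Set.Icc 0 L, ∀ y ∈ Set.Icc 0 L, ‖φ y - φ x‖ ≤ Hol * |y - x| ^ α)
    {t : ℝ} (ht : t ∈ Set.Icc 0 L) :
    ‖φ t‖ ^ 2 ≤ 4 * (∫ u in (0:ℝ)..L, ‖φ u‖ ^ 2) / L
      + 4 * (∫ u in (0:ℝ)..L, ‖φ u‖ ^ 2) ^ (2 * α / (2 * α + 1)) * Hol ^ (2 / (2 * α + 1)) := by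
  set Q : ℝ := ∫ u in (0:ℝ)..L, ‖φ u‖ ^ 2 with hQdef
  have hQ0 : 0 ≤ Q :=
    intervalIntegral.integral_nonneg hL.le fun u _ => by positivity
  have hd : (0:ℝ) < 2 * α + 1 := by linarith
  have hsecond : 0 ≤ 4 * Q ^ (2 * α / (2 * α + 1)) * Hol ^ (2 / (2 * α + 1)) := by positivity
  have hfirst : 0 ≤ 4 * Q / L := by positivity
  by_cases hcase : Hol ^ 2 * L ^ (2 * α + 1) ≤ Q
  · -- use ℓ = L
    have h := key_pointwise hL hα0 φ hφ hHol hHolder ht hL le_rfl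
    have hLsplit : L ^ (2 * α + 1) = L ^ (2 * α) * L := by
      rw [Real.rpow_add hL, Real.rpow_one]
    rw [hLsplit] at hcase
    have h2 : 2 * Hol ^ 2 * L ^ (2 * α) ≤ 2 * Q / L := by
      rw [le_div_iff₀ hL]
      nlinarith [hcase]
    have : ‖φ t‖ ^ 2 ≤ 4 * Q / L := by
      have e : 4 * Q / L = 2 * Q / L + 2 * Q / L := by ring
      rw [e]
      calc ‖φ t‖ ^ 2 ≤ 2 * Q / L + 2 * Hol ^ 2 * L ^ (2 * α) := h
        _ ≤ 2 * Q / L + 2 * Q / L := by linarith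
    linarith
  · push_neg at hcase
    have hHol0 : 0 < Hol := by
      rcases eq_or_lt_of_le hHol with h | h
      · exfalso
        rw [← h] at hcase
        simp at hcase
        linarith
      · exact h
    by_cases hQz : Q = 0
    · -- limit argument: ‖φ t‖ ^ 2 ≤ 0
      have hub : ∀ ℓ ∈ Ioc (0:ℝ) L, ‖φ t‖ ^ 2 ≤ 2 * Hol ^ 2 * ℓ ^ (2 * α) := by
        intro ℓ hℓ
        have := key_pointwise hL hα0 φ hφ hHol hHolder ht hℓ.1 hℓ.2
        rw [← hQdef, hQz] at this
        simpa using this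
      have htend : Filter.Tendsto (fun ℓ : ℝ => 2 * Hol ^ 2 * ℓ ^ (2 * α))
          (nhdsWithin 0 (Ioi 0)) (nhds 0) := by
        have hc : Filter.Tendsto (fun ℓ : ℝ => ℓ ^ (2 * α)) (nhds 0) (nhds 0) := by
          have := (Real.continuousAt_rpow_const 0 (2 * α) (Or.inr (by positivity))).tendsto
          rwa [Real.zero_rpow (by positivity : (2:ℝ) * α ≠ 0)] at this
        have := hc.const_mul (2 * Hol ^ 2)
        rw [mul_zero] at this
        exact this.mono_left nhdsWithin_le_nhds
      have hev : ∀ᶠ ℓ in nhdsWithin (0:ℝ) (Ioi 0),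
          ‖φ t‖ ^ 2 ≤ 2 * Hol ^ 2 * ℓ ^ (2 * α) :=
        Filter.eventually_of_mem (Ioc_mem_nhdsGT_of_mem ⟨le_rfl, hL⟩) hub
      have : ‖φ t‖ ^ 2 ≤ 0 := ge_of_tendsto htend hev
      linarith
    · have hQpos : 0 < Q := lt_of_le_of_ne hQ0 (Ne.symm hQz)
      set c : ℝ := 1 / (2 * α + 1) with hc
      have hc0 : 0 < c := by positivity
      have hHol2 : (0:ℝ) < Hol ^ 2 := by positivity
      have hQH : 0 < Q / Hol ^ 2 := div_pos hQpos hHol2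
      set ℓ : ℝ := (Q / Hol ^ 2) ^ c with hℓdef
      have hℓ0 : 0 < ℓ := Real.rpow_pos_of_pos hQH c
      have hℓL : ℓ ≤ L := by
        have h1 : Q / Hol ^ 2 < L ^ (2 * α + 1) := by
          rw [div_lt_iff₀ hHol2]
          nlinarith [hcase]
        have h2 : ℓ ≤ (L ^ (2 * α + 1)) ^ c := by
          exact Real.rpow_le_rpow hQH.le h1.le hc0.le
        rwa [← Real.rpow_mul hL.le, mul_one_div_cancel hd.ne', Real.rpow_one] at h2
      have h := key_pointwise hL hα0 φ hφ hHol hHolder ht hℓ0 hℓL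
      rw [← hQdef] at h
      -- identities
      have hHol2c : (Hol ^ 2 : ℝ) ^ c = Hol ^ (2 * c) := by
        rw [← Real.rpow_two, ← Real.rpow_mul hHol]
      have hℓeq : ℓ = Q ^ c / Hol ^ (2 * c) := by
        rw [hℓdef, Real.div_rpow hQpos.le hHol2.le, hHol2c]
      have e1 : Q / ℓ = Q ^ (2 * α / (2 * α + 1)) * Hol ^ (2 / (2 * α + 1)) := by
        rw [hℓeq, div_div_eq_mul_div,
          show Q * Hol ^ (2 * c) / Q ^ c = Q / Q ^ c * Hol ^ (2 * c) by ring,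
          show Q / Q ^ c = Q ^ (1 - c) by rw [Real.rpow_sub hQpos, Real.rpow_one],
          show (1 : ℝ) - c = 2 * α / (2 * α + 1) by rw [hc]; field_simp; ring,
          show (2 : ℝ) / (2 * α + 1) = 2 * c by rw [hc]; ring]
      have e2 : Hol ^ 2 * ℓ ^ (2 * α)
          = Q ^ (2 * α / (2 * α + 1)) * Hol ^ (2 / (2 * α + 1)) := by
        rw [hℓdef, ← Real.rpow_mul hQH.le, Real.div_rpow hQpos.le hHol2.le,
          show c * (2 * α) = 2 * α / (2 * α + 1) by rw [hc]; ring]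
        rw [← Real.rpow_two Hol, ← Real.rpow_mul hHol,
          show (2:ℝ) * (2 * α / (2 * α + 1)) = 2 - 2 / (2 * α + 1) by field_simp; ring]
        rw [Real.rpow_sub hHol0, Real.rpow_two]
        field_simp
      calc ‖φ t‖ ^ 2 ≤ 2 * Q / ℓ + 2 * Hol ^ 2 * ℓ ^ (2 * α) := h
        _ = 2 * (Q / ℓ) + 2 * (Hol ^ 2 * ℓ ^ (2 * α)) := by ring
        _ = 4 * Q ^ (2 * α / (2 * α + 1)) * Hol ^ (2 / (2 * α + 1)) := by
            rw [e1, e2]; ring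
        _ ≤ 4 * Q / L + 4 * Q ^ (2 * α / (2 * α + 1)) * Hol ^ (2 / (2 * α + 1)) := by
            linarith



/-- For `2 < p < 6`, `0 < α < 1/2` with `(p-2)/(2α+1) < 2`, and every
`δ > 0` there are constants `C₁, C₂` such that for all `λ > 0` and every continuous
`φ : [0,L] → ℂ` with α-Hölder seminorm at most `Hol`:
`λ‖φ‖_p^p ≤ C₁ λ ‖φ‖₂^p + C₂ λ^((4α+2)/(4α+4-p)) ‖φ‖₂^((4αp+4)/(4α+4-p)) + δ Hol²`. -/
theorem Lp_bound_with_small_holder_term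
    (L α p : ℝ) (hL : 0 < L) (hp2 : 2 < p) (hp6 : p < 6)
    (hα0 : 0 < α) (hα : α < 1 / 2) (hαp : (p - 2) / (2 * α + 1) < 2)
    (δ : ℝ) (hδ : 0 < δ) :
    ∃ C₁ C₂ : ℝ, ∀ lam : ℝ, 0 < lam →
      ∀ φ : ℝ → ℂ, ContinuousOn φ (Set.Icc 0 L) →
      ∀ Hol : ℝ, 0 ≤ Hol →
        (∀ x ∈ Set.Icc 0 L, ∀ y ∈ Set.Icc 0 L, ‖φ y - φ x‖ ≤ Hol * |y - x| ^ α) →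
        lam * (∫ t in (0:ℝ)..L, ‖φ t‖ ^ p)
          ≤ C₁ * lam * (Real.sqrt (∫ t in (0:ℝ)..L, ‖φ t‖ ^ 2)) ^ p
            + C₂ * lam ^ ((4 * α + 2) / (4 * α + 4 - p))
                * (Real.sqrt (∫ t in (0:ℝ)..L, ‖φ t‖ ^ 2))
                    ^ ((4 * α * p + 4) / (4 * α + 4 - p))
            + δ * Hol ^ 2 := by
  have hd : (0:ℝ) < 2 * α + 1 := by linarith
  have hp2' : (0:ℝ) < p - 2 := by linarith
  have hps : p - 2 < 4 * α + 2 := by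
    have := (div_lt_iff₀ hd).mp hαp
    linarith
  have hden : (0:ℝ) < 4 * α + 4 - p := by linarith
  set r : ℝ := (p - 2) / 2 with hr_def
  have hr0 : 0 < r := by positivity
  set s : ℝ := (4 * α + 2) / (p - 2) with hs_def
  set s' : ℝ := (4 * α + 2) / (4 * α + 4 - p) with hs'_def
  have hs1 : 1 < s := (one_lt_div hp2').mpr (by linarith)
  have hs'1 : 1 < s' := (one_lt_div hden).mpr (by linarith)
  have hconj : 1 / s + 1 / s' = 1 := by
    rw [hs_def, hs'_def, one_div_div, one_div_div, ← add_div]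
    rw [div_eq_one_iff_eq (by linarith : (4:ℝ) * α + 2 ≠ 0)]
    ring
  refine ⟨8 ^ r / L ^ r, δ ^ (-(s' / s)) * 8 ^ (r * s'), ?_⟩
  intro lam hlam φ hφ Hol hHol hHolder
  set Q : ℝ := ∫ t in (0:ℝ)..L, ‖φ t‖ ^ 2 with hQdef
  have hQ0 : 0 ≤ Q :=
    intervalIntegral.integral_nonneg hL.le fun u _ => by positivity
  set A : ℝ := 2 * α / (2 * α + 1) with hA_def
  set Bb : ℝ := 2 / (2 * α + 1) with hBb_def
  set B : ℝ := 4 * Q / L + 4 * Q ^ A * Hol ^ Bb with hB_def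
  have hB0 : 0 ≤ B := by positivity
  have hBpt : ∀ t ∈ Icc (0:ℝ) L, ‖φ t‖ ^ 2 ≤ B := fun t ht =>
    sup_bound hL hα0 φ hφ hHol hHolder ht
  -- pointwise p-bound
  have hpB : ∀ t ∈ Icc (0:ℝ) L,
      (fun t => ‖φ t‖ ^ p) t ≤ (fun _ : ℝ => B ^ r) t * (fun t => ‖φ t‖ ^ 2) t := by
    intro t ht
    simp only
    have h1 : ‖φ t‖ ≤ B ^ ((1:ℝ) / 2) := by
      rw [← Real.sqrt_eq_rpow]
      exact Real.le_sqrt_of_sq_le (hBpt t ht)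
    have h2 : ‖φ t‖ ^ (p - 2) ≤ (B ^ ((1:ℝ) / 2)) ^ (p - 2) :=
      Real.rpow_le_rpow (norm_nonneg _) h1 (by linarith)
    have h3 : (B ^ ((1:ℝ) / 2)) ^ (p - 2) = B ^ r := by
      rw [← Real.rpow_mul hB0]
      congr 1
      rw [hr_def]; ring
    have h4 : ‖φ t‖ ^ p = ‖φ t‖ ^ 2 * ‖φ t‖ ^ (p - 2) := by
      have e := Real.rpow_add' (norm_nonneg (φ t)) (show (2:ℝ) + (p - 2) ≠ 0 by intro h; linarith)
      rw [show (2:ℝ) + (p - 2) = p by ring] at e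
      rw [e, Real.rpow_two]
    rw [h4]
    calc ‖φ t‖ ^ 2 * ‖φ t‖ ^ (p - 2) ≤ ‖φ t‖ ^ 2 * B ^ r := by
          exact mul_le_mul_of_nonneg_left (h2.trans_eq h3) (by positivity)
      _ = B ^ r * ‖φ t‖ ^ 2 := by ring
  -- integrability
  have hcn : ContinuousOn (fun t => ‖φ t‖) (Icc 0 L) := hφ.norm
  have hi2 : IntervalIntegrable (fun t => ‖φ t‖ ^ 2) MeasureTheory.volume 0 L := by
    apply ContinuousOn.intervalIntegrable
    rw [uIcc_of_le hL.le]
    exact hcn.pow 2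
  have hip : IntervalIntegrable (fun t => ‖φ t‖ ^ p) MeasureTheory.volume 0 L := by
    apply ContinuousOn.intervalIntegrable
    rw [uIcc_of_le hL.le]
    exact hcn.rpow_const fun t _ => Or.inr (by linarith)
  have hImono : (∫ t in (0:ℝ)..L, ‖φ t‖ ^ p) ≤ B ^ r * Q := by
    have := intervalIntegral.integral_mono_on hL.le hip (hi2.const_mul (B ^ r)) hpB
    rwa [intervalIntegral.integral_const_mul] at this
  -- expand B ^ r
  have hBr : B ^ r ≤ 2 ^ r * ((4 * Q / L) ^ r + (4 * Q ^ A * Hol ^ Bb) ^ r) := by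
    rw [hB_def]
    exact rpow_add_le_two_rpow (by positivity) (by positivity) hr0.le
  have hsplit1 : (4 * Q / L) ^ r = 4 ^ r * Q ^ r / L ^ r := by
    rw [Real.div_rpow (by positivity) hL.le, Real.mul_rpow (by norm_num) hQ0]
  have hsplit2 : (4 * Q ^ A * Hol ^ Bb) ^ r = 4 ^ r * Q ^ (A * r) * Hol ^ (Bb * r) := by
    rw [Real.mul_rpow (by positivity) (by positivity),
      Real.mul_rpow (by norm_num) (by positivity),
      ← Real.rpow_mul hQ0, ← Real.rpow_mul hHol]
  -- main chain
  have hchain : lam * (∫ t in (0:ℝ)..L, ‖φ t‖ ^ p)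
      ≤ 2 ^ r * 4 ^ r / L ^ r * lam * (Q ^ r * Q)
        + (2 ^ r * 4 ^ r * lam * (Q ^ (A * r) * Q)) * Hol ^ (Bb * r) := by
    have h1 : lam * (∫ t in (0:ℝ)..L, ‖φ t‖ ^ p) ≤ lam * (B ^ r * Q) :=
      mul_le_mul_of_nonneg_left hImono hlam.le
    have h2 : lam * (B ^ r * Q)
        ≤ lam * ((2 ^ r * ((4 * Q / L) ^ r + (4 * Q ^ A * Hol ^ Bb) ^ r)) * Q) := by
      apply mul_le_mul_of_nonneg_left _ hlam.le
      exact mul_le_mul_of_nonneg_right hBr hQ0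
    refine h1.trans (h2.trans ?_)
    rw [hsplit1, hsplit2]
    apply le_of_eq
    ring
  -- term 1 identity
  have hsq1 : (Real.sqrt Q) ^ p = Q ^ r * Q := by
    rw [Real.sqrt_eq_rpow, ← Real.rpow_mul hQ0,
      show (1:ℝ) / 2 * p = r + 1 by rw [hr_def]; ring,
      Real.rpow_add' hQ0 (by positivity : (r:ℝ) + 1 ≠ 0), Real.rpow_one]
  have h8 : (8:ℝ) ^ r = 2 ^ r * 4 ^ r := by
    rw [show (8:ℝ) = 2 * 4 by norm_num, Real.mul_rpow (by norm_num) (by norm_num)]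
  have hterm1 : 2 ^ r * 4 ^ r / L ^ r * lam * (Q ^ r * Q)
      = 8 ^ r / L ^ r * lam * (Real.sqrt Q) ^ p := by rw [hsq1, h8]
  -- Young's inequality on term 2
  have hArne : (0:ℝ) < A * r + 1 := by positivity
  have hQar : Q ^ (A * r + 1) = Q ^ (A * r) * Q := by
    rw [Real.rpow_add' hQ0 hArne.ne', Real.rpow_one]
  have hyoung := young_eps (Real.rpow_nonneg hHol (Bb * r))
      (show (0:ℝ) ≤ 8 ^ r * lam * Q ^ (A * r + 1) by positivity) hs1 hs'1 hconj hδ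
  have hxs : (Hol ^ (Bb * r)) ^ s = Hol ^ 2 := by
    rw [← Real.rpow_mul hHol,
      show Bb * r * s = 2 by
        rw [hBb_def, hr_def, hs_def]; field_simp <;> ring,
      Real.rpow_two]
  have hys : (8 ^ r * lam * Q ^ (A * r + 1)) ^ s'
      = 8 ^ (r * s') * lam ^ s' * Q ^ ((A * r + 1) * s') := by
    rw [Real.mul_rpow (by positivity) (Real.rpow_nonneg hQ0 _),
        Real.mul_rpow (by positivity) hlam.le,
        ← Real.rpow_mul (by norm_num : (0:ℝ) ≤ 8),
        ← Real.rpow_mul hQ0]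
  have hsq2 : (Real.sqrt Q) ^ ((4 * α * p + 4) / (4 * α + 4 - p))
      = Q ^ ((A * r + 1) * s') := by
    rw [Real.sqrt_eq_rpow, ← Real.rpow_mul hQ0]
    congr 1
    rw [hA_def, hr_def, hs'_def]
    field_simp
    ring
  have hterm2 : (2 ^ r * 4 ^ r * lam * (Q ^ (A * r) * Q)) * Hol ^ (Bb * r)
      ≤ δ * Hol ^ 2 + δ ^ (-(s' / s)) * 8 ^ (r * s') * lam ^ s' * Q ^ ((A * r + 1) * s') := by
    have hyeq : 2 ^ r * 4 ^ r * lam * (Q ^ (A * r) * Q) = 8 ^ r * lam * Q ^ (A * r + 1) := by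
      rw [h8, hQar]
    rw [hyeq]
    calc 8 ^ r * lam * Q ^ (A * r + 1) * Hol ^ (Bb * r)
        ≤ δ * (Hol ^ (Bb * r)) ^ s
          + δ ^ (-(s' / s)) * (8 ^ r * lam * Q ^ (A * r + 1)) ^ s' := hyoung
      _ = δ * Hol ^ 2
          + δ ^ (-(s' / s)) * 8 ^ (r * s') * lam ^ s' * Q ^ ((A * r + 1) * s') := by
          rw [hxs, hys]; ring
  rw [hsq2]
  calc lam * (∫ t in (0:ℝ)..L, ‖φ t‖ ^ p)
      ≤ 2 ^ r * 4 ^ r / L ^ r * lam * (Q ^ r * Q)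
        + (2 ^ r * 4 ^ r * lam * (Q ^ (A * r) * Q)) * Hol ^ (Bb * r) := hchain
    _ ≤ 8 ^ r / L ^ r * lam * (Real.sqrt Q) ^ p
        + (δ * Hol ^ 2
            + δ ^ (-(s' / s)) * 8 ^ (r * s') * lam ^ s' * Q ^ ((A * r + 1) * s')) :=
        add_le_add (le_of_eq hterm1) hterm2
    _ = 8 ^ r / L ^ r * lam * (Real.sqrt Q) ^ p
        + δ ^ (-(s' / s)) * 8 ^ (r * s') * lam ^ s' * Q ^ ((A * r + 1) * s')
        + δ * Hol ^ 2 := by ring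
end

section
/- Let β, m, L > 0, let 0 ≤ γ < 1/2, and let ε ∈ ℝ satisfy 2ε < (βm²)^{1−γ}. Set θ_j = β((2πj/L)² + m²) for j ∈ ℤ. Then the series S(ξ) = (1/2) Σ_{j∈ℤ} log[(1 − 2ε θ_j^{γ−1})² + 4ξ² θ_j^{−2}] converges absolutely for every ξ ∈ ℝ, and there exist finite constants K₁ and K₂ > 0 depending only on γ, ε, β, L and m (not on ξ) such that S(ξ) ≥ −K₁ + K₂ √(max(|ξ|−1, 0)) for all ξ ∈ ℝ. -/
open Real

lemma aux_abs_log_le {c t : ℝ} (hc : 0 < c) (hc1 : c ≤ 1) (hct : c ≤ t) :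
    |Real.log t| ≤ |t - 1| / c := by
  have ht : 0 < t := hc.trans_le hct
  rcases le_or_gt 1 t with h | h
  · rw [abs_of_nonneg (Real.log_nonneg h), abs_of_nonneg (by linarith)]
    rw [le_div_iff₀ hc]
    have h1 := Real.log_le_sub_one_of_pos ht
    nlinarith [Real.log_nonneg h]
  · rw [abs_of_nonpos (Real.log_nonpos (by linarith) h.le),
      abs_of_nonpos (by linarith)]
    have h1 := Real.log_le_sub_one_of_pos (inv_pos.mpr ht)
    rw [Real.log_inv] at h1
    have h2 : (-Real.log t) * t ≤ (t⁻¹ - 1) * t :=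
      mul_le_mul_of_nonneg_right (by linarith) ht.le
    have h3 : (t⁻¹ - 1) * t = 1 - t := by field_simp
    have h4 : 0 ≤ -Real.log t := by
      have := Real.log_nonpos (by linarith : 0 ≤ t) h.le
      linarith
    rw [le_div_iff₀ hc]
    nlinarith [mul_le_mul_of_nonneg_left hct h4]

set_option maxHeartbeats 1000000 in
lemma aux_statement4 (θ : ℤ → ℝ) (γ ε M q : ℝ) (hM : 0 < M) (hq : 0 < q)
    (hγ0 : 0 ≤ γ) (hγ : γ < 1 / 2) (hε : 2 * ε < M ^ (1 - γ))
    (hθ : ∀ j : ℤ, θ j = q * (j : ℝ) ^ 2 + M) :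
    (∀ ξ : ℝ, Summable fun j : ℤ =>
        Real.log ((1 - 2 * ε * (θ j) ^ (γ - 1)) ^ 2 + 4 * ξ ^ 2 * (θ j) ^ (-2 : ℝ))) ∧
    ∃ K₁ K₂ : ℝ, 0 < K₂ ∧ ∀ ξ : ℝ,
      -K₁ + K₂ * Real.sqrt (max (|ξ| - 1) 0)
        ≤ (1 / 2) * ∑' j : ℤ,
            Real.log ((1 - 2 * ε * (θ j) ^ (γ - 1)) ^ 2 + 4 * ξ ^ 2 * (θ j) ^ (-2 : ℝ)) := by
  have hθpos : ∀ j, 0 < θ j := fun j => by rw [hθ]; positivity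
  have hθM : ∀ j, M ≤ θ j := fun j => by rw [hθ]; nlinarith [sq_nonneg (j : ℝ)]
  have hγ1 : γ - 1 ≤ 0 := by linarith
  have hu_pos : ∀ j, 0 < (θ j) ^ (γ - 1) := fun j => Real.rpow_pos_of_pos (hθpos j) _
  have hu_le : ∀ j, (θ j) ^ (γ - 1) ≤ M ^ (γ - 1) := fun j =>
    Real.rpow_le_rpow_of_nonpos hM (hθM j) hγ1
  have hMγ : 0 < M ^ (γ - 1) := Real.rpow_pos_of_pos hM _
  -- lower bound c for a_j = 1 - 2ε θ_j^(γ-1)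
  obtain ⟨c, hc_pos, hc1, hca⟩ : ∃ c : ℝ, 0 < c ∧ c ≤ 1 ∧
      ∀ j : ℤ, c ≤ 1 - 2 * ε * (θ j) ^ (γ - 1) := by
    refine ⟨1 - max (2 * ε) 0 * M ^ (γ - 1), ?_, ?_, ?_⟩
    · rcases le_or_gt (2 * ε) 0 with h | h
      · rw [max_eq_right h]; norm_num
      · rw [max_eq_left h.le]
        have h1 : 2 * ε * M ^ (γ - 1) < M ^ (1 - γ) * M ^ (γ - 1) :=
          mul_lt_mul_of_pos_right hε hMγ
        rw [← Real.rpow_add hM, show (1 - γ) + (γ - 1) = 0 by ring, Real.rpow_zero] at h1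
        linarith
    · nlinarith [le_max_right (2 * ε) 0, hMγ.le]
    · intro j
      have h2 : 2 * ε * (θ j) ^ (γ - 1) ≤ max (2 * ε) 0 * M ^ (γ - 1) := by
        rcases le_or_gt (2 * ε) 0 with h | h
        · have h3 : 2 * ε * (θ j) ^ (γ - 1) ≤ 0 := mul_nonpos_of_nonpos_of_nonneg h (hu_pos j).le
          have h4 : (0:ℝ) ≤ max (2 * ε) 0 * M ^ (γ - 1) :=
            mul_nonneg (le_max_right _ _) hMγ.le
          linarith
        · rw [max_eq_left h.le]
          exact mul_le_mul_of_nonneg_left (hu_le j) h.le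
      linarith
  set C : ℝ := 1 + |2 * ε| * M ^ (γ - 1) with hC_def
  have hC1 : 1 ≤ C := le_add_of_nonneg_right (by positivity)
  have hC0 : 0 < C := lt_of_lt_of_le one_pos hC1
  have hCa : ∀ j, 1 - 2 * ε * (θ j) ^ (γ - 1) ≤ C := by
    intro j
    have h1 : -(2 * ε) * (θ j) ^ (γ - 1) ≤ |2 * ε| * (θ j) ^ (γ - 1) :=
      mul_le_mul_of_nonneg_right (neg_le_abs _) (hu_pos j).le
    have h2 : |2 * ε| * (θ j) ^ (γ - 1) ≤ |2 * ε| * M ^ (γ - 1) :=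
      mul_le_mul_of_nonneg_left (hu_le j) (abs_nonneg _)
    rw [hC_def]; linarith
  -- summability of θ^(γ-1)
  have hp : (1 : ℝ) < 2 * (1 - γ) := by linarith
  have hsumθ : Summable (fun j : ℤ => (θ j) ^ (γ - 1)) := by
    rw [← Finset.summable_compl_iff ({0} : Finset ℤ)]
    refine Summable.of_nonneg_of_le (fun x => (hu_pos _).le) ?_
      (((summable_abs_int_rpow hp).mul_left (q ^ (γ - 1))).subtype _)
    rintro ⟨x, hx⟩
    simp only [Finset.mem_singleton] at hx
    have hx0 : ((x : ℝ)) ≠ 0 := Int.cast_ne_zero.mpr hx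
    have hx2 : 0 < q * (x : ℝ) ^ 2 := by positivity
    have h1 : (θ x) ^ (γ - 1) ≤ (q * (x : ℝ) ^ 2) ^ (γ - 1) := by
      refine Real.rpow_le_rpow_of_nonpos hx2 ?_ hγ1
      rw [hθ]; linarith
    have h2 : (q * (x : ℝ) ^ 2) ^ (γ - 1) = q ^ (γ - 1) * |(x : ℝ)| ^ (-(2 * (1 - γ))) := by
      rw [Real.mul_rpow hq.le (sq_nonneg _), ← sq_abs,
        ← Real.rpow_natCast |(x : ℝ)| 2, ← Real.rpow_mul (abs_nonneg _),
        show ((2:ℕ):ℝ) * (γ - 1) = -(2 * (1 - γ)) by push_cast; ring]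
    exact h1.trans_eq h2
  -- pointwise: θ^(-2) ≤ M^(-1-γ) θ^(γ-1)
  have hθinv : ∀ j, (θ j) ^ (-2 : ℝ) ≤ M ^ (-1 - γ) * (θ j) ^ (γ - 1) := by
    intro j
    have e : (θ j) ^ (-2 : ℝ) = (θ j) ^ (-1 - γ) * (θ j) ^ (γ - 1) := by
      rw [← Real.rpow_add (hθpos j)]
      congr 1
      ring
    rw [e]
    exact mul_le_mul_of_nonneg_right
      (Real.rpow_le_rpow_of_nonpos hM (hθM j) (by linarith)) (hu_pos j).le
  have hM1γ : 0 < M ^ (-1 - γ) := Real.rpow_pos_of_pos hM _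
  -- pointwise bound for summability
  have key1 : ∀ ξ : ℝ, ∀ j : ℤ,
      |Real.log ((1 - 2 * ε * (θ j) ^ (γ - 1)) ^ 2 + 4 * ξ ^ 2 * (θ j) ^ (-2 : ℝ))|
        ≤ (((1 + C) * |2 * ε| + 4 * ξ ^ 2 * M ^ (-1 - γ)) / c ^ 2) * (θ j) ^ (γ - 1) := by
    intro ξ j
    have hu := hu_pos j
    have hx0 : (0:ℝ) ≤ 4 * ξ ^ 2 * (θ j) ^ (-2 : ℝ) :=
      mul_nonneg (by positivity) (Real.rpow_nonneg (hθpos j).le _)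
    have ha_lb := hca j
    have ha_ub := hCa j
    have hc2 : (0:ℝ) < c ^ 2 := pow_pos hc_pos 2
    have hc21 : c ^ 2 ≤ 1 := by nlinarith
    have ht_lb : c ^ 2 ≤ (1 - 2 * ε * (θ j) ^ (γ - 1)) ^ 2 + 4 * ξ ^ 2 * (θ j) ^ (-2 : ℝ) := by
      nlinarith
    have h1 := aux_abs_log_le hc2 hc21 ht_lb
    have e1 : |(1 - 2 * ε * (θ j) ^ (γ - 1)) ^ 2 - 1|
        ≤ (1 + C) * (|2 * ε| * (θ j) ^ (γ - 1)) := by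
      have e2 : (1 - 2 * ε * (θ j) ^ (γ - 1)) ^ 2 - 1
          = ((1 - 2 * ε * (θ j) ^ (γ - 1)) - 1) * ((1 - 2 * ε * (θ j) ^ (γ - 1)) + 1) := by
        ring
      rw [e2, abs_mul]
      have e3 : |(1 - 2 * ε * (θ j) ^ (γ - 1)) - 1| = |2 * ε| * (θ j) ^ (γ - 1) := by
        rw [show (1 - 2 * ε * (θ j) ^ (γ - 1)) - 1 = -(2 * ε * (θ j) ^ (γ - 1)) by ring,
          abs_neg, abs_mul, abs_of_pos hu]
      have e4 : |(1 - 2 * ε * (θ j) ^ (γ - 1)) + 1| ≤ 1 + C := by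
        rw [abs_of_pos (by linarith)]
        linarith
      rw [e3]
      calc |2 * ε| * (θ j) ^ (γ - 1) * |(1 - 2 * ε * (θ j) ^ (γ - 1)) + 1|
          ≤ |2 * ε| * (θ j) ^ (γ - 1) * (1 + C) :=
            mul_le_mul_of_nonneg_left e4 (mul_nonneg (abs_nonneg _) hu.le)
        _ = (1 + C) * (|2 * ε| * (θ j) ^ (γ - 1)) := by ring
    have e5 : 4 * ξ ^ 2 * (θ j) ^ (-2 : ℝ) ≤ 4 * ξ ^ 2 * M ^ (-1 - γ) * (θ j) ^ (γ - 1) := by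
      calc 4 * ξ ^ 2 * (θ j) ^ (-2 : ℝ)
          ≤ 4 * ξ ^ 2 * (M ^ (-1 - γ) * (θ j) ^ (γ - 1)) :=
            mul_le_mul_of_nonneg_left (hθinv j) (by positivity)
        _ = 4 * ξ ^ 2 * M ^ (-1 - γ) * (θ j) ^ (γ - 1) := by ring
    have h2 : |(1 - 2 * ε * (θ j) ^ (γ - 1)) ^ 2 + 4 * ξ ^ 2 * (θ j) ^ (-2 : ℝ) - 1|
        ≤ ((1 + C) * |2 * ε| + 4 * ξ ^ 2 * M ^ (-1 - γ)) * (θ j) ^ (γ - 1) := by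
      calc |(1 - 2 * ε * (θ j) ^ (γ - 1)) ^ 2 + 4 * ξ ^ 2 * (θ j) ^ (-2 : ℝ) - 1|
          ≤ |(1 - 2 * ε * (θ j) ^ (γ - 1)) ^ 2 - 1| + 4 * ξ ^ 2 * (θ j) ^ (-2 : ℝ) := by
            have e6 : (1 - 2 * ε * (θ j) ^ (γ - 1)) ^ 2 + 4 * ξ ^ 2 * (θ j) ^ (-2 : ℝ) - 1
                = ((1 - 2 * ε * (θ j) ^ (γ - 1)) ^ 2 - 1) + 4 * ξ ^ 2 * (θ j) ^ (-2 : ℝ) := by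
              ring
            rw [e6]
            exact (abs_add_le _ _).trans (by rw [abs_of_nonneg hx0])
        _ ≤ (1 + C) * (|2 * ε| * (θ j) ^ (γ - 1))
            + 4 * ξ ^ 2 * M ^ (-1 - γ) * (θ j) ^ (γ - 1) := add_le_add e1 e5
        _ = ((1 + C) * |2 * ε| + 4 * ξ ^ 2 * M ^ (-1 - γ)) * (θ j) ^ (γ - 1) := by ring
    calc |Real.log ((1 - 2 * ε * (θ j) ^ (γ - 1)) ^ 2 + 4 * ξ ^ 2 * (θ j) ^ (-2 : ℝ))|
        ≤ |(1 - 2 * ε * (θ j) ^ (γ - 1)) ^ 2 + 4 * ξ ^ 2 * (θ j) ^ (-2 : ℝ) - 1| / c ^ 2 := h1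
      _ ≤ (((1 + C) * |2 * ε| + 4 * ξ ^ 2 * M ^ (-1 - γ)) * (θ j) ^ (γ - 1)) / c ^ 2 :=
          (div_le_div_iff_of_pos_right hc2).mpr h2
      _ = (((1 + C) * |2 * ε| + 4 * ξ ^ 2 * M ^ (-1 - γ)) / c ^ 2) * (θ j) ^ (γ - 1) := by
          ring
  have hf_sum : ∀ ξ : ℝ, Summable fun j : ℤ =>
      Real.log ((1 - 2 * ε * (θ j) ^ (γ - 1)) ^ 2 + 4 * ξ ^ 2 * (θ j) ^ (-2 : ℝ)) := by
    intro ξ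
    refine Summable.of_norm_bounded
      (hsumθ.mul_left (((1 + C) * |2 * ε| + 4 * ξ ^ 2 * M ^ (-1 - γ)) / c ^ 2)) ?_
    intro j
    rw [Real.norm_eq_abs]
    exact key1 ξ j
  refine ⟨hf_sum, ?_⟩
  -- constants
  set c₁ : ℝ := Real.log (1 + 4 / C ^ 2) with hc₁def
  have hc₁pos : 0 < c₁ := by
    refine Real.log_pos ?_
    have h0 : (0:ℝ) < 4 / C ^ 2 := by positivity
    linarith
  set κ : ℝ := Real.sqrt (2 * q) with hκdef
  have hκpos : 0 < κ := Real.sqrt_pos.mpr (by linarith)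
  -- the correction series g
  have hg_bound : ∀ j : ℤ, |2 * Real.log (1 - 2 * ε * (θ j) ^ (γ - 1))|
      ≤ (2 * |2 * ε| / c) * (θ j) ^ (γ - 1) := by
    intro j
    have h1 := aux_abs_log_le hc_pos hc1 (hca j)
    have e3 : |(1 - 2 * ε * (θ j) ^ (γ - 1)) - 1| = |2 * ε| * (θ j) ^ (γ - 1) := by
      rw [show (1 - 2 * ε * (θ j) ^ (γ - 1)) - 1 = -(2 * ε * (θ j) ^ (γ - 1)) by ring,
        abs_neg, abs_mul, abs_of_pos (hu_pos j)]
    rw [e3] at h1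
    rw [abs_mul, abs_two]
    calc 2 * |Real.log (1 - 2 * ε * (θ j) ^ (γ - 1))|
        ≤ 2 * (|2 * ε| * (θ j) ^ (γ - 1) / c) := by linarith
      _ = 2 * |2 * ε| / c * (θ j) ^ (γ - 1) := by ring
  have hg_sum : Summable (fun j : ℤ => 2 * Real.log (1 - 2 * ε * (θ j) ^ (γ - 1))) := by
    refine Summable.of_norm_bounded (hsumθ.mul_left (2 * |2 * ε| / c)) ?_
    intro j
    rw [Real.norm_eq_abs]
    exact hg_bound j
  -- the main series h
  have hh_nonneg : ∀ (ξ : ℝ) (j : ℤ),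
      0 ≤ Real.log (1 + 4 * ξ ^ 2 * (θ j) ^ (-2 : ℝ) / C ^ 2) := by
    intro ξ j
    refine Real.log_nonneg ?_
    have h0 : 0 ≤ 4 * ξ ^ 2 * (θ j) ^ (-2 : ℝ) / C ^ 2 :=
      div_nonneg (mul_nonneg (by positivity) (Real.rpow_nonneg (hθpos j).le _)) (by positivity)
    linarith
  have hh_sum : ∀ ξ : ℝ, Summable
      (fun j : ℤ => Real.log (1 + 4 * ξ ^ 2 * (θ j) ^ (-2 : ℝ) / C ^ 2)) := by
    intro ξ
    refine Summable.of_nonneg_of_le (hh_nonneg ξ) ?_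
      (hsumθ.mul_left (4 * ξ ^ 2 * M ^ (-1 - γ) / C ^ 2))
    intro j
    have hx0 : 0 ≤ 4 * ξ ^ 2 * (θ j) ^ (-2 : ℝ) / C ^ 2 :=
      div_nonneg (mul_nonneg (by positivity) (Real.rpow_nonneg (hθpos j).le _)) (by positivity)
    have h1 := Real.log_le_sub_one_of_pos
      (show (0:ℝ) < 1 + 4 * ξ ^ 2 * (θ j) ^ (-2 : ℝ) / C ^ 2 by linarith)
    have h2 : 4 * ξ ^ 2 * (θ j) ^ (-2 : ℝ) / C ^ 2
        ≤ 4 * ξ ^ 2 * M ^ (-1 - γ) / C ^ 2 * (θ j) ^ (γ - 1) := by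
      calc 4 * ξ ^ 2 * (θ j) ^ (-2 : ℝ) / C ^ 2
          ≤ 4 * ξ ^ 2 * (M ^ (-1 - γ) * (θ j) ^ (γ - 1)) / C ^ 2 := by
            refine (div_le_div_iff_of_pos_right (by positivity)).mpr ?_
            exact mul_le_mul_of_nonneg_left (hθinv j) (by positivity)
        _ = 4 * ξ ^ 2 * M ^ (-1 - γ) / C ^ 2 * (θ j) ^ (γ - 1) := by ring
    linarith
  -- pointwise splitting inequality
  have hfgh : ∀ (ξ : ℝ) (j : ℤ),
      2 * Real.log (1 - 2 * ε * (θ j) ^ (γ - 1))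
        + Real.log (1 + 4 * ξ ^ 2 * (θ j) ^ (-2 : ℝ) / C ^ 2)
      ≤ Real.log ((1 - 2 * ε * (θ j) ^ (γ - 1)) ^ 2 + 4 * ξ ^ 2 * (θ j) ^ (-2 : ℝ)) := by
    intro ξ j
    have ha := hca j
    have haC := hCa j
    have hapos : 0 < 1 - 2 * ε * (θ j) ^ (γ - 1) := lt_of_lt_of_le hc_pos ha
    have hx0 : 0 ≤ 4 * ξ ^ 2 * (θ j) ^ (-2 : ℝ) :=
      mul_nonneg (by positivity) (Real.rpow_nonneg (hθpos j).le _)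
    have hC2 : (0:ℝ) < C ^ 2 := by positivity
    have h1pos : 0 < 1 + 4 * ξ ^ 2 * (θ j) ^ (-2 : ℝ) / C ^ 2 := by
      have h0 : 0 ≤ 4 * ξ ^ 2 * (θ j) ^ (-2 : ℝ) / C ^ 2 := div_nonneg hx0 hC2.le
      linarith
    have e1 : 2 * Real.log (1 - 2 * ε * (θ j) ^ (γ - 1))
          + Real.log (1 + 4 * ξ ^ 2 * (θ j) ^ (-2 : ℝ) / C ^ 2)
        = Real.log ((1 - 2 * ε * (θ j) ^ (γ - 1)) ^ 2
            * (1 + 4 * ξ ^ 2 * (θ j) ^ (-2 : ℝ) / C ^ 2)) := by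
      rw [Real.log_mul (by positivity) (ne_of_gt h1pos), Real.log_pow]
      push_cast
      ring
    rw [e1]
    refine Real.log_le_log (mul_pos (pow_pos hapos 2) h1pos) ?_
    have haC2 : (1 - 2 * ε * (θ j) ^ (γ - 1)) ^ 2 ≤ C ^ 2 := by nlinarith
    have h5 : (1 - 2 * ε * (θ j) ^ (γ - 1)) ^ 2 / C ^ 2 ≤ 1 := by
      rw [div_le_one hC2]
      exact haC2
    have h6 : (1 - 2 * ε * (θ j) ^ (γ - 1)) ^ 2 * (4 * ξ ^ 2 * (θ j) ^ (-2 : ℝ) / C ^ 2)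
        ≤ 4 * ξ ^ 2 * (θ j) ^ (-2 : ℝ) := by
      calc (1 - 2 * ε * (θ j) ^ (γ - 1)) ^ 2 * (4 * ξ ^ 2 * (θ j) ^ (-2 : ℝ) / C ^ 2)
          = ((1 - 2 * ε * (θ j) ^ (γ - 1)) ^ 2 / C ^ 2) * (4 * ξ ^ 2 * (θ j) ^ (-2 : ℝ)) := by
            ring
        _ ≤ 1 * (4 * ξ ^ 2 * (θ j) ^ (-2 : ℝ)) := mul_le_mul_of_nonneg_right h5 hx0
        _ = 4 * ξ ^ 2 * (θ j) ^ (-2 : ℝ) := one_mul _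
    nlinarith [h6]
  -- tsum comparison
  have htsum_ge : ∀ ξ : ℝ,
      (∑' j : ℤ, 2 * Real.log (1 - 2 * ε * (θ j) ^ (γ - 1)))
        + (∑' j : ℤ, Real.log (1 + 4 * ξ ^ 2 * (θ j) ^ (-2 : ℝ) / C ^ 2))
      ≤ ∑' j : ℤ, Real.log ((1 - 2 * ε * (θ j) ^ (γ - 1)) ^ 2
          + 4 * ξ ^ 2 * (θ j) ^ (-2 : ℝ)) := by
    intro ξ
    rw [← Summable.tsum_add hg_sum (hh_sum ξ)]
    exact Summable.tsum_le_tsum (hfgh ξ) (hg_sum.add (hh_sum ξ)) (hf_sum ξ)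
  set A : ℝ := (2 * |2 * ε| / c) * ∑' j : ℤ, (θ j) ^ (γ - 1) with hAdef
  have hgA : -A ≤ ∑' j : ℤ, 2 * Real.log (1 - 2 * ε * (θ j) ^ (γ - 1)) := by
    have h1 : ∑' j : ℤ, (-((2 * |2 * ε| / c) * (θ j) ^ (γ - 1)))
        ≤ ∑' j : ℤ, 2 * Real.log (1 - 2 * ε * (θ j) ^ (γ - 1)) := by
      refine Summable.tsum_le_tsum ?_ ((hsumθ.mul_left _).neg) hg_sum
      intro j
      have h2 := hg_bound j
      have h3 := neg_abs_le (2 * Real.log (1 - 2 * ε * (θ j) ^ (γ - 1)))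
      linarith
    rwa [tsum_neg, tsum_mul_left] at h1
  refine ⟨A / 2 + (c₁ / (2 * κ)) * Real.sqrt (max (2 * M) 1), c₁ / (2 * κ),
    div_pos hc₁pos (by linarith), ?_⟩
  intro ξ
  have hS := htsum_ge ξ
  have hh_tsum_nonneg : 0 ≤ ∑' j : ℤ, Real.log (1 + 4 * ξ ^ 2 * (θ j) ^ (-2 : ℝ) / C ^ 2) :=
    tsum_nonneg (hh_nonneg ξ)
  have hK2pos : 0 < c₁ / (2 * κ) := div_pos hc₁pos (by linarith)
  have hsqmax : Real.sqrt (max (|ξ| - 1) 0) ≤ Real.sqrt |ξ| :=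
    Real.sqrt_le_sqrt (max_le (by linarith [abs_nonneg ξ]) (abs_nonneg ξ))
  rcases le_or_gt (|ξ|) (max (2 * M) 1) with hcase | hcase
  · -- small ξ
    have h1 : Real.sqrt (max (|ξ| - 1) 0) ≤ Real.sqrt (max (2 * M) 1) := by
      refine Real.sqrt_le_sqrt (max_le (by linarith) ?_)
      exact le_trans zero_le_one (le_max_right _ _)
    have h2 : (c₁ / (2 * κ)) * Real.sqrt (max (|ξ| - 1) 0)
        ≤ (c₁ / (2 * κ)) * Real.sqrt (max (2 * M) 1) :=
      mul_le_mul_of_nonneg_left h1 hK2pos.le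
    linarith
  · -- large ξ
    have h2M : 2 * M ≤ |ξ| := le_trans (le_max_left _ _) hcase.le
    have h1ξ : 1 ≤ |ξ| := le_trans (le_max_right _ _) hcase.le
    set n : ℕ := ⌊Real.sqrt (|ξ| / (2 * q))⌋₊ with hndef
    have hn_le : (n : ℝ) ≤ Real.sqrt (|ξ| / (2 * q)) := Nat.floor_le (Real.sqrt_nonneg _)
    have hn2 : (n : ℝ) ^ 2 ≤ |ξ| / (2 * q) := by
      have h := Real.sq_sqrt (show 0 ≤ |ξ| / (2 * q) by positivity)
      nlinarith [Real.sqrt_nonneg (|ξ| / (2 * q))]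
    have hθj : ∀ j ∈ Finset.Icc (0 : ℤ) (n : ℤ), θ j ≤ |ξ| := by
      intro j hj
      rw [Finset.mem_Icc] at hj
      have hj1 : (0 : ℝ) ≤ (j : ℝ) := by exact_mod_cast hj.1
      have hj2 : (j : ℝ) ≤ (n : ℝ) := by exact_mod_cast hj.2
      have hj3 : (j : ℝ) ^ 2 ≤ (n : ℝ) ^ 2 := by nlinarith
      rw [hθ]
      have hqj : q * (j : ℝ) ^ 2 ≤ |ξ| / 2 := by
        calc q * (j : ℝ) ^ 2 ≤ q * (|ξ| / (2 * q)) := by nlinarith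
          _ = |ξ| / 2 := by field_simp
      linarith
    have hterm : ∀ j ∈ Finset.Icc (0 : ℤ) (n : ℤ),
        c₁ ≤ Real.log (1 + 4 * ξ ^ 2 * (θ j) ^ (-2 : ℝ) / C ^ 2) := by
      intro j hj
      have hθj' := hθj j hj
      have hθ2 : (0 : ℝ) < (θ j) ^ 2 := pow_pos (hθpos j) 2
      have e2 : (θ j) ^ (-2 : ℝ) = ((θ j) ^ 2)⁻¹ := by
        rw [show ((-2 : ℝ)) = -((2 : ℕ) : ℝ) by norm_num, Real.rpow_neg (hθpos j).le,
          Real.rpow_natCast]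
      have h4 : (4 : ℝ) ≤ 4 * ξ ^ 2 * (θ j) ^ (-2 : ℝ) := by
        rw [e2, ← div_eq_mul_inv, le_div_iff₀ hθ2]
        nlinarith [sq_abs ξ, hθpos j]
      rw [hc₁def]
      refine Real.log_le_log (by positivity) ?_
      have h5 : (4 : ℝ) / C ^ 2 ≤ 4 * ξ ^ 2 * (θ j) ^ (-2 : ℝ) / C ^ 2 :=
        (div_le_div_iff_of_pos_right (by positivity)).mpr h4
      linarith
    have hcard : (Finset.Icc (0 : ℤ) (n : ℤ)).card = n + 1 := by
      rw [Int.card_Icc]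
      omega
    have hsum_ge : ((n : ℝ) + 1) * c₁
        ≤ ∑ j ∈ Finset.Icc (0 : ℤ) (n : ℤ),
            Real.log (1 + 4 * ξ ^ 2 * (θ j) ^ (-2 : ℝ) / C ^ 2) := by
      have h := Finset.card_nsmul_le_sum (Finset.Icc (0 : ℤ) (n : ℤ)) _ c₁ hterm
      rw [hcard, nsmul_eq_mul] at h
      calc ((n : ℝ) + 1) * c₁ = ((n + 1 : ℕ) : ℝ) * c₁ := by push_cast; ring
        _ ≤ _ := h
    have hh_ge : ((n : ℝ) + 1) * c₁
        ≤ ∑' j : ℤ, Real.log (1 + 4 * ξ ^ 2 * (θ j) ^ (-2 : ℝ) / C ^ 2) :=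
      le_trans hsum_ge (Summable.sum_le_tsum _ (fun j _ => hh_nonneg ξ j) (hh_sum ξ))
    have hsqrt_lt : Real.sqrt |ξ| / κ < (n : ℝ) + 1 := by
      calc Real.sqrt |ξ| / κ = Real.sqrt (|ξ| / (2 * q)) := by
            rw [hκdef, Real.sqrt_div (abs_nonneg ξ)]
        _ < (n : ℝ) + 1 := by
            rw [hndef]
            exact Nat.lt_floor_add_one _
    have h7 : (Real.sqrt |ξ| / κ) * c₁ ≤ ((n : ℝ) + 1) * c₁ :=
      mul_le_mul_of_nonneg_right hsqrt_lt.le hc₁pos.le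
    have heq : (Real.sqrt |ξ| / κ) * c₁ = 2 * ((c₁ / (2 * κ)) * Real.sqrt |ξ|) := by
      field_simp
    have h8 : (c₁ / (2 * κ)) * Real.sqrt (max (|ξ| - 1) 0)
        ≤ (c₁ / (2 * κ)) * Real.sqrt |ξ| :=
      mul_le_mul_of_nonneg_left hsqmax hK2pos.le
    have h9 : 0 ≤ (c₁ / (2 * κ)) * Real.sqrt (max (2 * M) 1) :=
      mul_nonneg hK2pos.le (Real.sqrt_nonneg _)
    linarith

/-- With `θ_j = β((2πj/L)² + m²)`, for `0 ≤ γ < 1/2` and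
`2ε < (βm²)^(1-γ)`, the series
`S(ξ) = (1/2) Σ_{j∈ℤ} log[(1 - 2ε θ_j^(γ-1))² + 4ξ² θ_j^(-2)]` converges absolutely for
every `ξ`, and there are constants `K₁` and `K₂ > 0`, independent of `ξ`, with
`S(ξ) ≥ -K₁ + K₂ √(max(|ξ|-1,0))`. -/
theorem log_series_summable_and_lower_bound
    (β m L γ ε : ℝ) (hβ : 0 < β) (hm : 0 < m) (hL : 0 < L)
    (hγ0 : 0 ≤ γ) (hγ : γ < 1 / 2) (hε : 2 * ε < (β * m ^ 2) ^ (1 - γ)) :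
    (∀ ξ : ℝ, Summable fun j : ℤ =>
        Real.log ((1 - 2 * ε * (β * ((2 * π * j / L) ^ 2 + m ^ 2)) ^ (γ - 1)) ^ 2
          + 4 * ξ ^ 2 * (β * ((2 * π * j / L) ^ 2 + m ^ 2)) ^ (-2 : ℝ))) ∧
    ∃ K₁ K₂ : ℝ, 0 < K₂ ∧ ∀ ξ : ℝ,
      -K₁ + K₂ * Real.sqrt (max (|ξ| - 1) 0)
        ≤ (1 / 2) * ∑' j : ℤ,
            Real.log ((1 - 2 * ε * (β * ((2 * π * j / L) ^ 2 + m ^ 2)) ^ (γ - 1)) ^ 2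
              + 4 * ξ ^ 2 * (β * ((2 * π * j / L) ^ 2 + m ^ 2)) ^ (-2 : ℝ)) := by
  have hq : 0 < β * (2 * π / L) ^ 2 :=
    mul_pos hβ (pow_pos (div_pos (by positivity) hL) 2)
  exact aux_statement4 (fun j : ℤ => β * ((2 * π * j / L) ^ 2 + m ^ 2)) γ ε (β * m ^ 2)
    (β * (2 * π / L) ^ 2) (by positivity) hq hγ0 hγ hε
    (fun j => by have hL0 := hL.ne'; field_simp)
end

section
/- Let β, m, L > 0 and 0 < s < 1/2, and set ν_k = β^{-1}((2πk/L)² + m²)^{-1} for k ∈ ℤ. Then for every t > 0: Σ_{k∈ℤ} e^{−t ν_k^{2s−1}} < ∞, the family (1 − e^{−t ν_k^{2s−1}})_{k∈ℤ} is multipliable with nonzero product, and consequently ∏_{k∈ℤ} (1 − e^{−t ν_k^{2s−1}})^{-1} is finite. -/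
open Real

/-- With `ν_k = β⁻¹((2πk/L)² + m²)⁻¹` and `0 < s < 1/2`, for every
`t > 0` the family `e^{-t ν_k^{2s-1}}` is summable, the family `(1 - e^{-t ν_k^{2s-1}})`
is multipliable with nonzero product, and the family of reciprocals
`(1 - e^{-t ν_k^{2s-1}})⁻¹` is multipliable (so `Tr e^{-tH₀}` is finite). -/
theorem trace_heat_semigroup_finite
    (β m L s : ℝ) (hβ : 0 < β) (hm : 0 < m) (hL : 0 < L)
    (hs0 : 0 < s) (hs : s < 1 / 2) (t : ℝ) (ht : 0 < t) :
    Summable (fun k : ℤ =>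
        Real.exp (-t * (β⁻¹ * ((2 * π * k / L) ^ 2 + m ^ 2)⁻¹) ^ (2 * s - 1))) ∧
    Multipliable (fun k : ℤ =>
        1 - Real.exp (-t * (β⁻¹ * ((2 * π * k / L) ^ 2 + m ^ 2)⁻¹) ^ (2 * s - 1))) ∧
    (∏' k : ℤ,
        (1 - Real.exp (-t * (β⁻¹ * ((2 * π * k / L) ^ 2 + m ^ 2)⁻¹) ^ (2 * s - 1)))) ≠ 0 ∧
    Multipliable (fun k : ℤ =>
        (1 - Real.exp (-t * (β⁻¹ * ((2 * π * k / L) ^ 2 + m ^ 2)⁻¹) ^ (2 * s - 1)))⁻¹) := by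
  have hπ := Real.pi_pos
  set e : ℝ := 1 - 2 * s with he_def
  have he : 0 < e := by rw [he_def]; linarith
  set q : ℝ := (2 * π / L) ^ 2 with hq_def
  have hq : 0 < q := by positivity
  set c : ℝ := min q (m ^ 2) with hc_def
  have hc : 0 < c := lt_min hq (by positivity)
  set w : ℤ → ℝ := fun k => (2 * π * k / L) ^ 2 + m ^ 2 with hw_def
  have hw : ∀ k, 0 < w k := fun k => by positivity
  have hwm : ∀ k, m ^ 2 ≤ w k := fun k => by
    simp only [hw_def]; nlinarith [sq_nonneg (2 * π * (k : ℝ) / L)]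
  have hwc : ∀ k : ℤ, c * ((k : ℝ) ^ 2 + 1) ≤ w k := by
    intro k
    have h1 : (2 * π * (k : ℝ) / L) ^ 2 = q * (k : ℝ) ^ 2 := by
      rw [hq_def]; ring
    have h2 : c ≤ q := min_le_left _ _
    have h3 : c ≤ m ^ 2 := min_le_right _ _
    have hk2 : (0 : ℝ) ≤ (k : ℝ) ^ 2 := sq_nonneg _
    simp only [hw_def, h1]
    nlinarith
  set a : ℤ → ℝ := fun k => (β * w k) ^ e with ha_def
  have ha_pos : ∀ k, 0 < a k := fun k => Real.rpow_pos_of_pos (by positivity) _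
  -- rewrite ν_k^(2s-1) as a k
  have hnu : ∀ k : ℤ,
      (β⁻¹ * ((2 * π * (k : ℝ) / L) ^ 2 + m ^ 2)⁻¹) ^ (2 * s - 1) = a k := by
    intro k
    have hbw : (0 : ℝ) < β * w k := by positivity
    have h1 : β⁻¹ * ((2 * π * (k : ℝ) / L) ^ 2 + m ^ 2)⁻¹ = (β * w k)⁻¹ := by
      rw [hw_def, mul_inv]
    rw [h1, Real.inv_rpow hbw.le, ← Real.rpow_neg hbw.le]
    show (β * w k) ^ (-(2 * s - 1)) = (β * w k) ^ e
    congr 1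
    rw [he_def]; ring
  -- the key summability
  set n : ℕ := ⌈1 / e⌉₊ with hn_def
  have hne : 1 ≤ (n : ℝ) * e := by
    have h := Nat.le_ceil (1 / e)
    rw [div_le_iff₀ he] at h
    calc (1 : ℝ) ≤ 1 := le_refl _
    _ ≤ (n : ℝ) * e := by rw [hn_def]; linarith
  have hn0 : 0 < (n : ℝ) := by
    by_contra h
    push_neg at h
    have : (n : ℝ) * e ≤ 0 := mul_nonpos_of_nonpos_of_nonneg h he.le
    linarith
  set C : ℝ := (n : ℝ) ^ n / (t ^ n * (β * c) ^ ((n : ℝ) * e)) with hC_def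
  have key : ∀ k : ℤ, Real.exp (-t * a k) ≤ C * ((k : ℝ) ^ 2 + 1)⁻¹ := by
    intro k
    have hk1 : (1 : ℝ) ≤ (k : ℝ) ^ 2 + 1 := by nlinarith [sq_nonneg ((k : ℝ))]
    have hbc : (0 : ℝ) < β * c := by positivity
    -- a k ^ n ≥ (β c)^(n e) * (k²+1)
    have hastep : (β * c) ^ ((n : ℝ) * e) * ((k : ℝ) ^ 2 + 1) ≤ a k ^ n := by
      have h1 : a k ^ n = (β * w k) ^ (e * (n : ℝ)) := by
        rw [ha_def, Real.rpow_mul (by positivity : (0:ℝ) ≤ β * w k), Real.rpow_natCast]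
      have h2 : (β * (c * ((k : ℝ) ^ 2 + 1))) ^ (e * (n : ℝ))
          ≤ (β * w k) ^ (e * (n : ℝ)) := by
        apply Real.rpow_le_rpow (by positivity)
        · have := hwc k
          nlinarith
        · positivity
      have h3 : (β * (c * ((k : ℝ) ^ 2 + 1))) ^ (e * (n : ℝ))
          = (β * c) ^ ((n : ℝ) * e) * (((k : ℝ) ^ 2 + 1)) ^ ((n : ℝ) * e) := by
        rw [show β * (c * ((k : ℝ) ^ 2 + 1)) = (β * c) * ((k : ℝ) ^ 2 + 1) by ring,
          Real.mul_rpow hbc.le (by positivity), mul_comm e ((n : ℝ))]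
      have h4 : ((k : ℝ) ^ 2 + 1) ≤ (((k : ℝ) ^ 2 + 1)) ^ ((n : ℝ) * e) := by
        nth_rewrite 1 [← Real.rpow_one ((k : ℝ) ^ 2 + 1)]
        exact Real.rpow_le_rpow_of_exponent_le hk1 hne
      rw [h1]
      calc (β * c) ^ ((n : ℝ) * e) * ((k : ℝ) ^ 2 + 1)
          ≤ (β * c) ^ ((n : ℝ) * e) * (((k : ℝ) ^ 2 + 1)) ^ ((n : ℝ) * e) :=
            mul_le_mul_of_nonneg_left h4 (by positivity)
        _ = (β * (c * ((k : ℝ) ^ 2 + 1))) ^ (e * (n : ℝ)) := h3.symm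
        _ ≤ (β * w k) ^ (e * (n : ℝ)) := h2
    -- exp lower bound
    have hpow : (t * a k / n) ^ n ≤ Real.exp (t * a k) := by
      have hx0 : (0 : ℝ) ≤ t * a k / n := by positivity
      have hxe : t * a k / n ≤ Real.exp (t * a k / n) := by
        have := Real.add_one_le_exp (t * a k / n); linarith
      calc (t * a k / n) ^ n ≤ (Real.exp (t * a k / n)) ^ n :=
            pow_le_pow_left₀ hx0 hxe n
        _ = Real.exp ((n : ℝ) * (t * a k / n)) := (Real.exp_nat_mul _ n).symm
        _ = Real.exp (t * a k) := by
            congr 1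
            field_simp
    have h5 : Real.exp (-t * a k) ≤ ((t * a k / n) ^ n)⁻¹ := by
      rw [neg_mul, Real.exp_neg]
      have hpos : (0 : ℝ) < (t * a k / n) ^ n := by
        have : (0 : ℝ) < t * a k / n := by positivity
        positivity
      exact inv_anti₀ hpos hpow
    refine h5.trans ?_
    have h6 : ((t * a k / n) ^ n)⁻¹ = (n : ℝ) ^ n / (t ^ n * a k ^ n) := by
      rw [div_pow, inv_div, mul_pow]
    have h7 : C * ((k : ℝ) ^ 2 + 1)⁻¹
        = (n : ℝ) ^ n / (t ^ n * ((β * c) ^ ((n : ℝ) * e) * ((k : ℝ) ^ 2 + 1))) := by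
      rw [hC_def]
      field_simp
    rw [h6, h7]
    have hden : t ^ n * ((β * c) ^ ((n : ℝ) * e) * ((k : ℝ) ^ 2 + 1))
        ≤ t ^ n * a k ^ n := mul_le_mul_of_nonneg_left hastep (by positivity)
    exact div_le_div_of_nonneg_left (by positivity) (by positivity) hden
  -- summability of (k²+1)⁻¹ over ℤ
  have hnat : Summable (fun j : ℕ => (((j : ℝ)) ^ 2 + 1)⁻¹) := by
    have h0 : Summable (fun j : ℕ => 1 / ((j : ℝ)) ^ 2) :=
      Real.summable_one_div_nat_pow.mpr one_lt_two
    have h1 : Summable (fun j : ℕ => 1 / ((j : ℝ) + 1) ^ 2) := by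
      have h2 := (summable_nat_add_iff 1).mpr h0
      exact h2.congr (fun j => by push_cast; ring)
    apply Summable.of_nonneg_of_le (fun j => by positivity) ?_ (h1.mul_left 2)
    intro j
    have hj2 : ((j : ℝ) + 1) ^ 2 ≤ 2 * ((j : ℝ) ^ 2 + 1) := by
      nlinarith [sq_nonneg ((j : ℝ) - 1)]
    rw [← one_div, mul_one_div, div_le_div_iff₀ (by positivity) (by positivity)]
    linarith
  have hbase : Summable (fun k : ℤ => ((k : ℝ) ^ 2 + 1)⁻¹) := by
    apply Summable.of_nat_of_neg_add_one
    · exact hnat.congr (fun j => by push_cast; ring_nf)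
    · exact ((summable_nat_add_iff 1).mpr hnat).congr (fun j => by push_cast; ring_nf)
  have hSum : Summable (fun k : ℤ => Real.exp (-t * a k)) :=
    Summable.of_nonneg_of_le (fun k => (Real.exp_pos _).le) key (hbase.mul_left C)
  -- positivity of factors and uniform bound
  have hx_lt : ∀ k, Real.exp (-t * a k) < 1 := by
    intro k
    rw [Real.exp_lt_one_iff]
    exact mul_neg_of_neg_of_pos (by linarith) (ha_pos k)
  set g : ℤ → ℝ := fun k => 1 - Real.exp (-t * a k) with hg_def
  have hg_pos : ∀ k, 0 < g k := fun k => by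
    have := hx_lt k; simp only [hg_def]; linarith
  have hg_le1 : ∀ k, g k ≤ 1 := fun k => by
    have := Real.exp_pos (-t * a k); simp only [hg_def]; linarith
  set δ : ℝ := Real.exp (-t * (β * m ^ 2) ^ e) with hδ_def
  have hδ1 : δ < 1 := by
    rw [hδ_def, Real.exp_lt_one_iff]
    exact mul_neg_of_neg_of_pos (by linarith)
      (Real.rpow_pos_of_pos (by positivity) _)
  have hxδ : ∀ k, Real.exp (-t * a k) ≤ δ := by
    intro k
    rw [hδ_def]
    apply Real.exp_le_exp.mpr
    have h1 : (β * m ^ 2) ^ e ≤ a k :=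
      Real.rpow_le_rpow (by positivity)
        (mul_le_mul_of_nonneg_left (hwm k) hβ.le) he.le
    have h2 := mul_le_mul_of_nonneg_left h1 ht.le
    linarith
  have hgδ : ∀ k, 1 - δ ≤ g k := fun k => by
    have := hxδ k; simp only [hg_def]; linarith
  have hδ0 : (0 : ℝ) < 1 - δ := by linarith
  -- summability of logs
  have hlog : Summable (fun k : ℤ => Real.log (g k)) := by
    apply Summable.of_abs
    apply Summable.of_nonneg_of_le (fun k => abs_nonneg _) ?_
      (hSum.mul_left ((1 - δ)⁻¹))
    intro k
    have h1 : Real.log (g k) ≤ 0 := Real.log_nonpos (hg_pos k).le (hg_le1 k)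
    rw [abs_of_nonpos h1, ← Real.log_inv]
    have h2 : Real.log (g k)⁻¹ ≤ (g k)⁻¹ - 1 :=
      Real.log_le_sub_one_of_pos (inv_pos.mpr (hg_pos k))
    refine h2.trans ?_
    have h3 : (g k)⁻¹ - 1 = (1 - g k) / g k := by
      rw [sub_div, div_self (hg_pos k).ne', one_div]
    rw [h3]
    have h4 : 1 - g k = Real.exp (-t * a k) := by simp [hg_def]
    rw [h4]
    calc Real.exp (-t * a k) / g k
        ≤ Real.exp (-t * a k) / (1 - δ) :=
          div_le_div_of_nonneg_left (Real.exp_pos _).le hδ0 (hgδ k)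
      _ = (1 - δ)⁻¹ * Real.exp (-t * a k) := by
          rw [div_eq_mul_inv, mul_comm]
  -- multipliability of g via exp/log
  have hMul : Multipliable g :=
    Real.multipliable_of_summable_log hg_pos hlog
  have htprod : (∏' k : ℤ, g k) ≠ 0 := by
    have h := Real.rexp_tsum_eq_tprod hg_pos hlog
    rw [← h]
    exact Real.exp_ne_zero _
  have hloginv : Summable (fun k : ℤ => Real.log (g k)⁻¹) :=
    hlog.neg.congr (fun k => (Real.log_inv _).symm)
  have hMulInv : Multipliable (fun k : ℤ => (g k)⁻¹) :=
    Real.multipliable_of_summable_log (fun k => inv_pos.mpr (hg_pos k)) hloginv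
  -- assemble
  refine ⟨?_, ?_, ?_, ?_⟩
  · exact hSum.congr (fun k => by rw [hnu k])
  · exact hMul.congr (fun k => by rw [hg_def]; simp [hnu k])
  · have : (fun k : ℤ =>
        1 - Real.exp (-t * (β⁻¹ * ((2 * π * k / L) ^ 2 + m ^ 2)⁻¹) ^ (2 * s - 1))) = g := by
      funext k
      rw [hg_def]; simp [hnu k]
    rw [this]
    exact htprod
  · exact hMulInv.congr (fun k => by rw [hg_def]; simp [hnu k])
end

section
/- Let β, m, L > 0 and set θ_k = β((2πk/L)² + m²) for k ∈ ℤ. For each k let ρ_k be the probability measure on ℝ² with density (θ_k/2π) exp(−θ_k |x|²/2), and let μ = ⊗_{k∈ℤ} ρ_k be the infinite product probability measure on (ℝ²)^ℤ. Then for every 0 ≤ γ < 1/2 and every ε ∈ ℝ with 2ε < (βm²)^{1−γ}, one has ∫ exp( ε Σ_{k∈ℤ} θ_k^γ |x_k|² ) dμ < ∞. -/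
open Real MeasureTheory ProbabilityTheory


noncomputable def modeMeasure (θ : ℝ) : Measure (ℝ × ℝ) :=
  volume.withDensity fun v => ENNReal.ofReal (θ / (2 * π) * Real.exp (-θ * (v.1 ^ 2 + v.2 ^ 2) / 2))

lemma gauss_lintegral {c : ℝ} (hc : 0 < c) :
    ∫⁻ x : ℝ, ENNReal.ofReal (Real.exp (-c * x ^ 2)) = ENNReal.ofReal (Real.sqrt (π / c)) := by
  rw [← integral_gaussian c,
    MeasureTheory.ofReal_integral_eq_lintegral_ofReal (integrable_exp_neg_mul_sq hc)
      (Filter.Eventually.of_forall fun x => (Real.exp_pos _).le)]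

lemma modeMeasure_lintegral {θ a : ℝ} (hθ : 0 < θ) (ha : 0 ≤ a) (h2a : 2 * a < θ) :
    ∫⁻ v : ℝ × ℝ, ENNReal.ofReal (Real.exp (a * (v.1 ^ 2 + v.2 ^ 2))) ∂(modeMeasure θ)
      = ENNReal.ofReal (θ / (θ - 2 * a)) := by
  have hc : 0 < θ / 2 - a := by linarith
  have hmeasD : Measurable fun v : ℝ × ℝ =>
      ENNReal.ofReal (θ / (2 * π) * Real.exp (-θ * (v.1 ^ 2 + v.2 ^ 2) / 2)) := by
    fun_prop
  have hmeasG : Measurable fun v : ℝ × ℝ => ENNReal.ofReal (Real.exp (a * (v.1 ^ 2 + v.2 ^ 2))) := by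
    fun_prop
  rw [modeMeasure, lintegral_withDensity_eq_lintegral_mul _ hmeasD hmeasG]
  have key : ∀ v : ℝ × ℝ,
      (ENNReal.ofReal (θ / (2 * π) * Real.exp (-θ * (v.1 ^ 2 + v.2 ^ 2) / 2)) *
        ENNReal.ofReal (Real.exp (a * (v.1 ^ 2 + v.2 ^ 2))))
      = ENNReal.ofReal (θ / (2 * π)) *
          (ENNReal.ofReal (Real.exp (-(θ / 2 - a) * v.1 ^ 2)) *
            ENNReal.ofReal (Real.exp (-(θ / 2 - a) * v.2 ^ 2))) := by
    intro v
    rw [← ENNReal.ofReal_mul (by positivity), ← ENNReal.ofReal_mul (by positivity),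
      ← ENNReal.ofReal_mul (by positivity), ← Real.exp_add, mul_assoc, ← Real.exp_add]
    ring_nf
  simp only [Pi.mul_apply, key]
  rw [lintegral_const_mul _ (by fun_prop)]
  rw [MeasureTheory.Measure.volume_eq_prod ℝ ℝ, MeasureTheory.lintegral_prod_mul
      (f := fun x : ℝ => ENNReal.ofReal (Real.exp (-(θ / 2 - a) * x ^ 2)))
      (g := fun x : ℝ => ENNReal.ofReal (Real.exp (-(θ / 2 - a) * x ^ 2)))
      (by fun_prop) (by fun_prop)]
  rw [gauss_lintegral hc,
    ← ENNReal.ofReal_mul (by positivity), ← ENNReal.ofReal_mul (by positivity)]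
  congr 1
  rw [Real.mul_self_sqrt (by positivity)]
  have h2 : θ - 2 * a ≠ 0 := by linarith
  have h3 : θ / 2 - a ≠ 0 := ne_of_gt hc
  have hπ := Real.pi_ne_zero
  field_simp


lemma aux_lintegral_exp_sum {Ω ι : Type*} [MeasurableSpace Ω] {μ : Measure Ω}
    [IsProbabilityMeasure μ] (f : ι → Ω → ℝ) (hmeas : ∀ i, Measurable (f i))
    (hindep : iIndepFun f μ) (s : Finset ι) :
    ∫⁻ ω, ENNReal.ofReal (Real.exp (∑ i ∈ s, f i ω)) ∂μ
      = ∏ i ∈ s, ∫⁻ ω, ENNReal.ofReal (Real.exp (f i ω)) ∂μ := by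
  classical
  induction s using Finset.induction_on with
  | empty => simp
  | @insert i s hi ih =>
    have hexp : Measurable fun y : ℝ => ENNReal.ofReal (Real.exp y) := by fun_prop
    have hidp : IndepFun (fun ω => ENNReal.ofReal (Real.exp (f i ω)))
        (fun ω => ENNReal.ofReal (Real.exp (∑ j ∈ s, f j ω))) μ := by
      have h1 := (hindep.indepFun_finsetSum_of_notMem hmeas hi).symm
      have h2 := h1.comp hexp hexp
      have : (fun ω => ENNReal.ofReal (Real.exp ((∑ j ∈ s, f j) ω)))
          = fun ω => ENNReal.ofReal (Real.exp (∑ j ∈ s, f j ω)) := by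
        funext ω; rw [Finset.sum_apply]
      rwa [Function.comp_def, Function.comp_def, this] at h2
    have key : ∫⁻ ω, (fun ω => ENNReal.ofReal (Real.exp (f i ω)) *
          ENNReal.ofReal (Real.exp (∑ j ∈ s, f j ω))) ω ∂μ
        = (∫⁻ ω, ENNReal.ofReal (Real.exp (f i ω)) ∂μ) *
          ∫⁻ ω, ENNReal.ofReal (Real.exp (∑ j ∈ s, f j ω)) ∂μ :=
      lintegral_mul_eq_lintegral_mul_lintegral_of_indepFun
        (hexp.comp (hmeas i))
        (hexp.comp (Finset.measurable_sum s fun j _ => hmeas j)) hidp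
    simp only [Finset.sum_insert hi, Real.exp_add,
      ENNReal.ofReal_mul (Real.exp_nonneg _)]
    rw [key, ih, Finset.prod_insert hi]

lemma aux_inv_one_sub_le_exp {t δ : ℝ} (ht0 : 0 ≤ t) (htδ : t ≤ δ) (hδ : δ < 1) :
    (1 - t)⁻¹ ≤ Real.exp (t / (1 - δ)) := by
  have h1t : 0 < 1 - t := by linarith
  have hD : 0 < 1 - δ := by linarith
  have h1 : (1 - t)⁻¹ = 1 + t / (1 - t) := by field_simp; ring
  have h2 : t / (1 - t) ≤ t / (1 - δ) := by gcongr
  have h3 := Real.add_one_le_exp (t / (1 - δ))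
  linarith

lemma aux_summable_int {γ : ℝ} (hγ : γ < 1 / 2) :
    Summable (fun k : ℤ => (1 + (k : ℝ) ^ 2) ^ (γ - 1)) := by
  have hnat : Summable (fun n : ℕ => (1 + (n : ℝ) ^ 2) ^ (γ - 1)) := by
    have hs : Summable (fun n : ℕ => ((n : ℝ)) ^ (2 * γ - 2)) :=
      Real.summable_nat_rpow.mpr (by linarith)
    have hs1 : Summable (fun n : ℕ => (2 : ℝ) ^ (1 - γ) * (((n + 1 : ℕ) : ℝ)) ^ (2 * γ - 2)) :=
      ((summable_nat_add_iff 1).mpr hs).mul_left _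
    refine Summable.of_nonneg_of_le (fun n => Real.rpow_nonneg (by positivity) _) (fun n => ?_) hs1
    have hb1 : (1 + (n : ℝ) ^ 2) ^ (γ - 1) ≤ (((n : ℝ) + 1) ^ 2 / 2) ^ (γ - 1) :=
      Real.rpow_le_rpow_of_nonpos (by positivity) (by nlinarith [sq_nonneg ((n : ℝ) - 1)])
        (by linarith)
    have hb2 : (((n : ℝ) + 1) ^ 2 / 2) ^ (γ - 1)
        = (2 : ℝ) ^ (1 - γ) * (((n + 1 : ℕ) : ℝ)) ^ (2 * γ - 2) := by
      push_cast
      rw [Real.div_rpow (by positivity) (by norm_num), ← Real.rpow_two, ← Real.rpow_mul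
        (by positivity), div_eq_mul_inv, ← Real.rpow_neg (by norm_num)]
      rw [show -(γ - 1) = 1 - γ by ring, show 2 * (γ - 1) = 2 * γ - 2 by ring]
      ring
    rw [hb2] at hb1
    exact hb1
  apply Summable.of_nat_of_neg
  · exact hnat.congr fun n => by push_cast; ring_nf
  · exact hnat.congr fun n => by push_cast; ring_nf
lemma aux_main (θ : ℤ → ℝ) (b γ ε : ℝ) (hb : 0 < b) (hθge : ∀ k, b ≤ θ k)
    (hγ0 : 0 ≤ γ) (hγ : γ < 1 / 2) (hε : 2 * ε < b ^ (1 - γ)) (hεpos : 0 < ε)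
    (hsum : Summable fun k : ℤ => θ k ^ (γ - 1))
    (μ : Measure (ℤ → ℝ × ℝ)) [IsProbabilityMeasure μ]
    (hindep : iIndepFun (fun k (x : ℤ → ℝ × ℝ) => x k) μ)
    (hmarg : ∀ k : ℤ, μ.map (fun x => x k) = modeMeasure (θ k)) :
    ∫⁻ x : ℤ → ℝ × ℝ,
        ENNReal.ofReal (Real.exp (ε * ∑' k : ℤ, θ k ^ γ * ((x k).1 ^ 2 + (x k).2 ^ 2))) ∂μ
      < ⊤ := by
  classical
  have hθpos : ∀ k, 0 < θ k := fun k => lt_of_lt_of_le hb (hθge k)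
  set X : ℤ → (ℤ → ℝ × ℝ) → ℝ :=
    fun k x => ε * (θ k ^ γ * ((x k).1 ^ 2 + (x k).2 ^ 2)) with hX
  have hXnonneg : ∀ k x, 0 ≤ X k x := fun k x =>
    mul_nonneg hεpos.le (mul_nonneg (Real.rpow_nonneg (hθpos k).le _) (by positivity))
  have hXmeas : ∀ k, Measurable (X k) := by
    intro k
    apply Measurable.const_mul
    apply Measurable.const_mul
    exact ((measurable_fst.comp (measurable_pi_apply k)).pow_const 2).add
      ((measurable_snd.comp (measurable_pi_apply k)).pow_const 2)
  have hXindep : iIndepFun X μ := by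
    have h := hindep.comp (fun k (v : ℝ × ℝ) => ε * (θ k ^ γ * (v.1 ^ 2 + v.2 ^ 2)))
      (fun k => by fun_prop)
    exact h
  -- constants
  have hpow : 0 < b ^ (1 - γ) := Real.rpow_pos_of_pos hb _
  set δ : ℝ := 2 * ε / b ^ (1 - γ) with hδ
  have hδ0 : 0 ≤ δ := by positivity
  have hδ1 : δ < 1 := (div_lt_one hpow).mpr hε
  have hD : 0 < 1 - δ := by linarith
  set K : ℝ := 2 * ε / (1 - δ) with hK
  have hK0 : 0 ≤ K := by positivity
  set T : ℝ := ∑' k : ℤ, θ k ^ (γ - 1) with hT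
  have hTF : ∀ F : Finset ℤ, ∑ k ∈ F, θ k ^ (γ - 1) ≤ T :=
    fun F => Summable.sum_le_tsum F (fun k _ => Real.rpow_nonneg (hθpos k).le _) hsum
  -- per-mode bound
  have hmode : ∀ k : ℤ, ∫⁻ x, ENNReal.ofReal (Real.exp (X k x)) ∂μ
      ≤ ENNReal.ofReal (Real.exp (K * θ k ^ (γ - 1))) := by
    intro k
    have hθk := hθpos k
    have ha0 : 0 ≤ ε * θ k ^ γ := mul_nonneg hεpos.le (Real.rpow_nonneg hθk.le _)
    have h2a : 2 * (ε * θ k ^ γ) < θ k := by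
      have h1 : b ^ (1 - γ) ≤ θ k ^ (1 - γ) := Real.rpow_le_rpow hb.le (hθge k) (by linarith)
      have h2 : 2 * ε < θ k ^ (1 - γ) := lt_of_lt_of_le hε h1
      have h3 : θ k ^ (1 - γ) * θ k ^ γ = θ k := by
        rw [← Real.rpow_add hθk]; norm_num
      calc 2 * (ε * θ k ^ γ) = 2 * ε * θ k ^ γ := by ring
        _ < θ k ^ (1 - γ) * θ k ^ γ :=
            mul_lt_mul_of_pos_right h2 (Real.rpow_pos_of_pos hθk γ)
        _ = θ k := h3
    have hXeq : ∀ x : ℤ → ℝ × ℝ,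
        X k x = (ε * θ k ^ γ) * ((x k).1 ^ 2 + (x k).2 ^ 2) := fun x => by
      simp only [hX]; ring
    have hmapint : ∫⁻ x, ENNReal.ofReal (Real.exp (X k x)) ∂μ
        = ∫⁻ v : ℝ × ℝ, ENNReal.ofReal (Real.exp ((ε * θ k ^ γ) * (v.1 ^ 2 + v.2 ^ 2)))
            ∂(modeMeasure (θ k)) := by
      simp_rw [hXeq]
      rw [← hmarg k, lintegral_map (by fun_prop) (measurable_pi_apply k)]
    rw [hmapint, modeMeasure_lintegral hθk ha0 h2a]
    set t : ℝ := 2 * ε * θ k ^ (γ - 1) with ht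
    have htθ : θ k ^ (γ - 1) * θ k = θ k ^ γ := by
      nth_rewrite 2 [← Real.rpow_one (θ k)]
      rw [← Real.rpow_add hθk]; norm_num
    have ht0 : 0 ≤ t := mul_nonneg (by linarith) (Real.rpow_nonneg hθk.le _)
    have htδ : t ≤ δ := by
      have h1 : θ k ^ (γ - 1) ≤ b ^ (γ - 1) :=
        Real.rpow_le_rpow_of_nonpos hb (hθge k) (by linarith)
      have h2 : b ^ (γ - 1) = (b ^ (1 - γ))⁻¹ := by
        rw [show γ - 1 = -(1 - γ) by ring, Real.rpow_neg hb.le]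
      calc t ≤ 2 * ε * b ^ (γ - 1) :=
          mul_le_mul_of_nonneg_left h1 (by linarith)
        _ = δ := by rw [h2, hδ, div_eq_mul_inv]
    have hfrac : θ k / (θ k - 2 * (ε * θ k ^ γ)) = (1 - t)⁻¹ := by
      have hden : θ k - 2 * (ε * θ k ^ γ) = θ k * (1 - t) := by
        rw [ht]; linear_combination 2 * ε * htθ
      rw [hden, ← div_div, div_self hθk.ne', one_div]
    rw [hfrac]
    refine ENNReal.ofReal_le_ofReal ((aux_inv_one_sub_le_exp ht0 htδ hδ1).trans (le_of_eq ?_))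
    rw [hK, ht]; congr 1; ring
  -- finite product bound
  have hFbound : ∀ F : Finset ℤ,
      ∫⁻ x, ENNReal.ofReal (Real.exp (∑ k ∈ F, X k x)) ∂μ
        ≤ ENNReal.ofReal (Real.exp (K * T)) := by
    intro F
    rw [aux_lintegral_exp_sum X hXmeas hXindep F]
    calc ∏ k ∈ F, ∫⁻ x, ENNReal.ofReal (Real.exp (X k x)) ∂μ
        ≤ ∏ k ∈ F, ENNReal.ofReal (Real.exp (K * θ k ^ (γ - 1))) :=
          Finset.prod_le_prod' fun k _ => hmode k
      _ = ENNReal.ofReal (∏ k ∈ F, Real.exp (K * θ k ^ (γ - 1))) :=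
          (ENNReal.ofReal_prod_of_nonneg fun k _ => (Real.exp_nonneg _)).symm
      _ = ENNReal.ofReal (Real.exp (∑ k ∈ F, K * θ k ^ (γ - 1))) := by rw [Real.exp_sum]
      _ ≤ ENNReal.ofReal (Real.exp (K * T)) := by
          apply ENNReal.ofReal_le_ofReal
          apply Real.exp_le_exp.mpr
          rw [← Finset.mul_sum]
          exact mul_le_mul_of_nonneg_left (hTF F) hK0
  -- pointwise sup bound
  have hpt : ∀ x : ℤ → ℝ × ℝ,
      ENNReal.ofReal (Real.exp (ε * ∑' k : ℤ, θ k ^ γ * ((x k).1 ^ 2 + (x k).2 ^ 2)))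
        ≤ ⨆ F : Finset ℤ, ENNReal.ofReal (Real.exp (∑ k ∈ F, X k x)) := by
    intro x
    by_cases hsx : Summable fun k : ℤ => θ k ^ γ * ((x k).1 ^ 2 + (x k).2 ^ 2)
    · have h2 : Filter.Tendsto (fun F : Finset ℤ => ∑ k ∈ F, X k x) Filter.atTop
          (nhds (ε * ∑' k : ℤ, θ k ^ γ * ((x k).1 ^ 2 + (x k).2 ^ 2))) := by
        have heq : (fun F : Finset ℤ => ∑ k ∈ F, X k x)
            = fun F : Finset ℤ => ε * ∑ k ∈ F, θ k ^ γ * ((x k).1 ^ 2 + (x k).2 ^ 2) := by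
          funext F; rw [Finset.mul_sum]
        rw [heq]
        exact hsx.hasSum.const_mul ε
      have htend : Filter.Tendsto
          (fun F : Finset ℤ => ENNReal.ofReal (Real.exp (∑ k ∈ F, X k x))) Filter.atTop
          (nhds (ENNReal.ofReal (Real.exp
            (ε * ∑' k : ℤ, θ k ^ γ * ((x k).1 ^ 2 + (x k).2 ^ 2))))) :=
        (ENNReal.continuous_ofReal.tendsto _).comp ((Real.continuous_exp.tendsto _).comp h2)
      exact le_of_tendsto' htend fun F =>
        le_iSup (fun F : Finset ℤ => ENNReal.ofReal (Real.exp (∑ k ∈ F, X k x))) F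
    · rw [tsum_eq_zero_of_not_summable hsx]
      simpa using
        le_iSup (fun F : Finset ℤ => ENNReal.ofReal (Real.exp (∑ k ∈ F, X k x))) (∅ : Finset ℤ)
  -- combine
  have hmeasF : ∀ F : Finset ℤ,
      Measurable fun x : ℤ → ℝ × ℝ => ENNReal.ofReal (Real.exp (∑ k ∈ F, X k x)) := fun F =>
    (Real.measurable_exp.comp (Finset.measurable_sum F fun k _ => hXmeas k)).ennreal_ofReal
  have hdir : Directed (· ≤ ·)
      fun F : Finset ℤ => (fun x => ENNReal.ofReal (Real.exp (∑ k ∈ F, X k x))) := by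
    intro F G
    refine ⟨F ∪ G, fun x => ?_, fun x => ?_⟩ <;>
    · apply ENNReal.ofReal_le_ofReal
      apply Real.exp_le_exp.mpr
      exact Finset.sum_le_sum_of_subset_of_nonneg (by simp) fun k _ _ => hXnonneg k x
  calc ∫⁻ x, ENNReal.ofReal (Real.exp (ε * ∑' k : ℤ, θ k ^ γ * ((x k).1 ^ 2 + (x k).2 ^ 2))) ∂μ
      ≤ ∫⁻ x, ⨆ F : Finset ℤ, ENNReal.ofReal (Real.exp (∑ k ∈ F, X k x)) ∂μ :=
        lintegral_mono hpt
    _ = ⨆ F : Finset ℤ, ∫⁻ x, ENNReal.ofReal (Real.exp (∑ k ∈ F, X k x)) ∂μ :=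
        lintegral_iSup_directed (fun F => (hmeasF F).aemeasurable) hdir
    _ ≤ ENNReal.ofReal (Real.exp (K * T)) := iSup_le hFbound
    _ < ⊤ := ENNReal.ofReal_lt_top

/-- Let `μ = ⊗_{k∈ℤ} ρ_k` be the product of the Gaussian mode measures
`ρ_k` with parameters `θ_k = β((2πk/L)² + m²)` (characterized by: the coordinates are
independent with marginal laws `ρ_k`). Then for `0 ≤ γ < 1/2` and `2ε < (βm²)^{1-γ}`,
`∫ exp(ε Σ_k θ_k^γ |x_k|²) dμ < ∞`. -/
theorem exponential_integrability_fractional_sobolev_norm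
    (β m L γ ε : ℝ) (hβ : 0 < β) (hm : 0 < m) (hL : 0 < L)
    (hγ0 : 0 ≤ γ) (hγ : γ < 1 / 2) (hε : 2 * ε < (β * m ^ 2) ^ (1 - γ))
    (μ : Measure (ℤ → ℝ × ℝ)) [IsProbabilityMeasure μ]
    (hindep : iIndepFun (fun k (x : ℤ → ℝ × ℝ) => x k) μ)
    (hmarg : ∀ k : ℤ,
      μ.map (fun x => x k) = modeMeasure (β * ((2 * π * k / L) ^ 2 + m ^ 2))) :
    ∫⁻ x : ℤ → ℝ × ℝ,
        ENNReal.ofReal (Real.exp (ε * ∑' k : ℤ,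
          (β * ((2 * π * k / L) ^ 2 + m ^ 2)) ^ γ * ((x k).1 ^ 2 + (x k).2 ^ 2))) ∂μ
      < ⊤ := by
  classical
  have hbm : 0 < β * m ^ 2 := by positivity
  rcases le_or_gt ε 0 with hε0 | hε0
  · have hb : ∀ x : ℤ → ℝ × ℝ, ENNReal.ofReal (Real.exp (ε * ∑' k : ℤ,
        (β * ((2 * π * k / L) ^ 2 + m ^ 2)) ^ γ * ((x k).1 ^ 2 + (x k).2 ^ 2))) ≤ 1 := by
      intro x
      rw [ENNReal.ofReal_le_one, Real.exp_le_one_iff]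
      apply mul_nonpos_of_nonpos_of_nonneg hε0
      apply tsum_nonneg
      intro k
      have hθk : (0 : ℝ) < β * ((2 * π * k / L) ^ 2 + m ^ 2) := by positivity
      exact mul_nonneg (Real.rpow_nonneg hθk.le _) (by positivity)
    refine lt_of_le_of_lt (lintegral_mono hb) ?_
    rw [lintegral_one, measure_univ]
    exact ENNReal.one_lt_top
  · have hθge : ∀ k : ℤ, β * m ^ 2 ≤ β * ((2 * π * k / L) ^ 2 + m ^ 2) := fun k => by
      nlinarith [sq_nonneg (2 * π * (k : ℝ) / L)]
    have hsum : Summable fun k : ℤ => (β * ((2 * π * k / L) ^ 2 + m ^ 2)) ^ (γ - 1) := by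
      set c : ℝ := β * min ((2 * π / L) ^ 2) (m ^ 2) with hc
      have hc0 : 0 < c := by
        have h1 : (0 : ℝ) < (2 * π / L) ^ 2 := by positivity
        have h2 : (0 : ℝ) < m ^ 2 := by positivity
        exact mul_pos hβ (lt_min h1 h2)
      have hbase : Summable fun k : ℤ => (c * (1 + (k : ℝ) ^ 2)) ^ (γ - 1) := by
        have h := aux_summable_int (γ := γ) hγ
        have heq : (fun k : ℤ => (c * (1 + (k : ℝ) ^ 2)) ^ (γ - 1))
            = fun k : ℤ => c ^ (γ - 1) * (1 + (k : ℝ) ^ 2) ^ (γ - 1) := by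
          funext k; rw [Real.mul_rpow hc0.le (by positivity)]
        rw [heq]; exact h.mul_left _
      refine Summable.of_nonneg_of_le (fun k => Real.rpow_nonneg ?_ _) (fun k => ?_) hbase
      · exact (lt_of_lt_of_le hbm (hθge k)).le
      · refine Real.rpow_le_rpow_of_nonpos (mul_pos hc0 (by positivity)) ?_ (by linarith)
        have hmin1 : min ((2 * π / L) ^ 2) (m ^ 2) ≤ (2 * π / L) ^ 2 := min_le_left _ _
        have hmin2 : min ((2 * π / L) ^ 2) (m ^ 2) ≤ m ^ 2 := min_le_right _ _
        have hk2 : (0 : ℝ) ≤ (k : ℝ) ^ 2 := sq_nonneg _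
        have hsq : (2 * π * (k : ℝ) / L) ^ 2 = (2 * π / L) ^ 2 * (k : ℝ) ^ 2 := by
          field_simp
        have e1 : β * min ((2 * π / L) ^ 2) (m ^ 2) ≤ β * m ^ 2 :=
          mul_le_mul_of_nonneg_left hmin2 hβ.le
        have e2 : β * (min ((2 * π / L) ^ 2) (m ^ 2) * (k : ℝ) ^ 2)
            ≤ β * ((2 * π / L) ^ 2 * (k : ℝ) ^ 2) :=
          mul_le_mul_of_nonneg_left (mul_le_mul_of_nonneg_right hmin1 hk2) hβ.le
        rw [hsq, hc]
        nlinarith [e1, e2]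
    exact aux_main _ (β * m ^ 2) γ ε hbm hθge hγ0 hγ hε hε0 hsum μ hindep hmarg
end
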